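/- arXiv:2208.08310 — 5 statements merged into one kernel-verified Lean document; each statement's English description precedes it below -/
import Mathlib

section
/- Let (γ,E) be a digraph and let F₁, F₂ be finite in-trees. The map φ sending a digraph homomorphism τ from (γ,E) to F₁ ⋆ F₂ to the pair (π₁ ∘ τ, π₂ ∘ τ) is a bijection from the set of digraph homomorphisms (γ,E) → F₁ ⋆ F₂ onto the set of pairs (τ₁, τ₂), where τ₁ is a homomorphism (γ,E) → F₁ and τ₂ is a homomorphism (γ,E) → F₂ satisfying height(τ₁ u) = height(τ₂ u) for every u : γ. -/
namespace DDS

/-- A homomorphism of digraphs `(γ, E) → (δ, E')` is a map preserving edges. -/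
def IsHom {γ : Type*} {δ : Type*} (E : γ → γ → Prop) (E' : δ → δ → Prop) (τ : γ → δ) : Prop :=
  ∀ ⦃u v⦄, E u v → E' (τ u) (τ v)

/-- Two digraphs are isomorphic if there is an edge-preserving (in both directions) bijection. -/
def Isomorphic {γ : Type*} {δ : Type*} (E : γ → γ → Prop) (E' : δ → δ → Prop) : Prop :=
  ∃ e : γ ≃ δ, ∀ u v, E u v ↔ E' (e u) (e v)

/-- The number of digraph homomorphisms from `(γ, E)` to `(δ, E')`. -/
noncomputable def homCount (γ : Type*) (δ : Type*) (E : γ → γ → Prop) (E' : δ → δ → Prop) : ℕ :=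
  Nat.card {τ : γ → δ // IsHom E E' τ}

/-- An in-tree: a root and a parent map such that the root is a fixed point and every
vertex reaches the root by iterating the parent map. -/
structure InTree (V : Type*) where
  root : V
  parent : V → V
  parent_root : parent root = root
  reaches_root : ∀ v, ∃ k, parent^[k] v = root

namespace InTree

variable {V : Type*}

/-- Edges of an in-tree are directed towards the root. -/
def Edge (T : InTree V) (v w : V) : Prop := v ≠ T.root ∧ w = T.parent v

/-- The height of a vertex: the least `k` with `parent^[k] v = root`. -/
noncomputable def height (T : InTree V) (v : V) : ℕ := sInf {k | T.parent^[k] v = T.root}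

lemma height_spec (T : InTree V) (v : V) : T.parent^[T.height v] v = T.root :=
  Nat.sInf_mem (T.reaches_root v)

@[simp] lemma height_root (T : InTree V) : T.height T.root = 0 :=
  Nat.sInf_eq_zero.mpr (Or.inl (by simp))

lemma height_eq_zero_iff (T : InTree V) {v : V} : T.height v = 0 ↔ v = T.root := by
  constructor
  · intro h
    have hs := T.height_spec v
    rw [h] at hs
    simpa using hs
  · rintro rfl
    exact T.height_root

lemma height_parent (T : InTree V) {v : V} (hv : v ≠ T.root) :
    T.height v = T.height (T.parent v) + 1 := by
  have h1 : T.height v ≠ 0 := fun h => hv (T.height_eq_zero_iff.mp h)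
  obtain ⟨m, hm⟩ := Nat.exists_eq_succ_of_ne_zero h1
  have hsp : T.parent^[T.height v] v = T.root := T.height_spec v
  rw [hm, Function.iterate_succ_apply] at hsp
  have hle : T.height (T.parent v) ≤ m := Nat.sInf_le hsp
  have hge : T.height v ≤ T.height (T.parent v) + 1 := by
    apply Nat.sInf_le
    show T.parent^[T.height (T.parent v) + 1] v = T.root
    rw [Function.iterate_succ_apply]
    exact T.height_spec (T.parent v)
  omega

lemma height_parent_le (T : InTree V) (v : V) : T.height (T.parent v) ≤ T.height v := by
  by_cases hv : v = T.root
  · subst hv; rw [T.parent_root]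
  · rw [T.height_parent hv]; omega

/-- The height of a finite in-tree: the maximum height of a vertex. -/
noncomputable def treeHeight [Fintype V] (T : InTree V) : ℕ := Finset.univ.sup T.height

section Star

variable {V₁ V₂ : Type*} (T₁ : InTree V₁) (T₂ : InTree V₂)

/-- Vertices of the `⋆` product: pairs of vertices of equal height. -/
def StarVertex := {x : V₁ × V₂ // T₁.height x.1 = T₂.height x.2}

lemma star_parent_mem (x : V₁ × V₂) (hx : T₁.height x.1 = T₂.height x.2) :
    T₁.height (T₁.parent x.1) = T₂.height (T₂.parent x.2) := by
  by_cases h : x.1 = T₁.root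
  · have h2 : x.2 = T₂.root := by
      apply T₂.height_eq_zero_iff.mp
      rw [← hx, h, T₁.height_root]
    rw [h, h2, T₁.parent_root, T₂.parent_root, T₁.height_root, T₂.height_root]
  · have h2 : x.2 ≠ T₂.root := by
      intro hc
      apply h
      apply T₁.height_eq_zero_iff.mp
      rw [hx, hc, T₂.height_root]
    have e1 := T₁.height_parent h
    have e2 := T₂.height_parent h2
    omega

/-- The parent map of the `⋆` product. -/
def starParent (x : StarVertex T₁ T₂) : StarVertex T₁ T₂ :=
  ⟨(T₁.parent x.1.1, T₂.parent x.1.2), star_parent_mem T₁ T₂ x.1 x.2⟩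

lemma starParent_iterate (k : ℕ) (x : StarVertex T₁ T₂) :
    ((starParent T₁ T₂)^[k] x).1 = (T₁.parent^[k] x.1.1, T₂.parent^[k] x.1.2) := by
  induction k generalizing x with
  | zero => simp
  | succ k ih =>
      rw [Function.iterate_succ_apply, Function.iterate_succ_apply,
        Function.iterate_succ_apply, ih]
      rfl

/-- The `⋆` product of two in-trees. -/
def star : InTree (StarVertex T₁ T₂) where
  root := ⟨(T₁.root, T₂.root), by simp⟩
  parent := starParent T₁ T₂
  parent_root := by
    apply Subtype.ext
    show (T₁.parent T₁.root, T₂.parent T₂.root) = (T₁.root, T₂.root)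
    rw [T₁.parent_root, T₂.parent_root]
  reaches_root := by
    intro x
    refine ⟨T₁.height x.1.1, Subtype.ext ?_⟩
    rw [starParent_iterate]
    have h1 : T₁.parent^[T₁.height x.1.1] x.1.1 = T₁.root := T₁.height_spec _
    have h2 : T₂.parent^[T₁.height x.1.1] x.1.2 = T₂.root := by
      rw [x.2]; exact T₂.height_spec _
    show (_, _) = (T₁.root, T₂.root)
    rw [h1, h2]

end Star

section Cut

variable (T : InTree V) (t : ℕ)

/-- Vertices of the cut at level `t`: vertices of height at most `t`. -/
def CutVertex := {v : V // T.height v ≤ t}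

/-- The parent map of the cut. -/
def cutParent (x : CutVertex T t) : CutVertex T t :=
  ⟨T.parent x.1, le_trans (T.height_parent_le x.1) x.2⟩

lemma cutParent_iterate (k : ℕ) (x : CutVertex T t) :
    ((cutParent T t)^[k] x).1 = T.parent^[k] x.1 := by
  induction k generalizing x with
  | zero => simp
  | succ k ih =>
      rw [Function.iterate_succ_apply, Function.iterate_succ_apply, ih]
      rfl

/-- The cut of an in-tree at level `t`: the sub-in-tree induced on vertices of height `≤ t`. -/
def cut : InTree (CutVertex T t) where
  root := ⟨T.root, by simp⟩
  parent := cutParent T t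
  parent_root := Subtype.ext T.parent_root
  reaches_root := fun x =>
    ⟨T.height x.1, Subtype.ext (by rw [cutParent_iterate]; exact T.height_spec x.1)⟩

end Cut

end InTree

section Unroll

variable {α : Type*} (f : α → α) (v : α)

/-- Vertices of the unroll of the functional graph of `f` from `v`. -/
def UnrollVertex := {ui : α × ℕ // f^[ui.2] ui.1 = v}

/-- The parent map of the unroll: `(u, i+1) ↦ (f u, i)`, fixing the root `(v, 0)`. -/
def unrollParent : UnrollVertex f v → UnrollVertex f v
  | ⟨(u, 0), h⟩ => ⟨(u, 0), h⟩
  | ⟨(u, i+1), h⟩ => ⟨(f u, i), by rw [← Function.iterate_succ_apply]; exact h⟩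

lemma unrollParent_iterate :
    ∀ (i : ℕ) (u : α) (h : f^[i] u = v),
      (unrollParent f v)^[i] ⟨(u, i), h⟩ = ⟨(v, 0), rfl⟩ := by
  intro i
  induction i with
  | zero =>
      intro u h
      have hu : u = v := by simpa using h
      subst hu
      rfl
  | succ i ih =>
      intro u h
      show (unrollParent f v)^[i] ⟨(f u, i), _⟩ = _
      exact ih (f u) _

/-- The unroll of the functional graph of `f : α → α` from the point `v`. -/
def unroll : InTree (UnrollVertex f v) where
  root := ⟨(v, 0), rfl⟩
  parent := unrollParent f v
  parent_root := rfl
  reaches_root := fun x => ⟨x.1.2, by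
    obtain ⟨⟨u, i⟩, h⟩ := x
    exact unrollParent_iterate f v i u h⟩

end Unroll

section FG

/-- The number of periodic points of `f`. -/
noncomputable def periodicCount {α : Type*} (f : α → α) : ℕ :=
  Nat.card {x : α // ∃ n, 1 ≤ n ∧ f^[n] x = x}

/-- A functional graph is connected if the equivalence relation generated by
`x ∼ f x` relates all pairs of points. -/
def FGConnected {α : Type*} (f : α → α) : Prop :=
  ∀ x y : α, Relation.EqvGen (fun u w => f u = w) x y

/-- Isomorphism of functional graphs. -/
def FGIso {α β : Type*} (f : α → α) (g : β → β) : Prop :=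
  ∃ e : α ≃ β, ∀ x, e (f x) = g (e x)

/-- The product of two functional graphs. -/
def prodMap {α γ : Type*} (f : α → α) (h : γ → γ) : α × γ → α × γ :=
  fun z => (f z.1, h z.2)

/-- `FGContains f h g` means the functional graph of `g` is (isomorphic to) a union of
connected components of the product `f × h`. -/
def FGContains {α γ β : Type*} (f : α → α) (h : γ → γ) (g : β → β) : Prop :=
  ∃ e : β → α × γ, Function.Injective e ∧ e ∘ g = prodMap f h ∘ e ∧
    ∀ z, prodMap f h z ∈ Set.range e → z ∈ Set.range e

end FG

end DDS

open DDS DDS.InTree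

/-- The map `φ : τ ↦ (π₁ ∘ τ, π₂ ∘ τ)` is a bijection from the set of digraph homomorphisms
`(γ, E) → F₁ ⋆ F₂` onto the set of pairs of homomorphisms to `F₁` and `F₂` which agree on
heights pointwise. -/
theorem star_proj_bijOn {γ V₁ V₂ : Type*} [Fintype V₁] [Fintype V₂]
    (E : γ → γ → Prop) (F₁ : InTree V₁) (F₂ : InTree V₂) :
    Set.BijOn (fun (τ : γ → StarVertex F₁ F₂) => ((fun u => (τ u).1.1), (fun u => (τ u).1.2)))
      {τ | IsHom E (F₁.star F₂).Edge τ}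
      {p : (γ → V₁) × (γ → V₂) | IsHom E F₁.Edge p.1 ∧ IsHom E F₂.Edge p.2 ∧
        ∀ u, F₁.height (p.1 u) = F₂.height (p.2 u)} := by
  have root_eq : (F₁.star F₂).root = ⟨(F₁.root, F₂.root), by simp⟩ := rfl
  have ne_root : ∀ x : StarVertex F₁ F₂, x ≠ (F₁.star F₂).root →
      x.1.1 ≠ F₁.root ∧ x.1.2 ≠ F₂.root := by
    rintro ⟨⟨a, b⟩, h⟩ hx
    by_cases ha : a = F₁.root
    · exfalso; apply hx; apply Subtype.ext
      have hb : b = F₂.root := F₂.height_eq_zero_iff.mp (by rw [← h, ha, F₁.height_root])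
      simp [ha, hb, root_eq]
    · refine ⟨ha, fun hb => ha (F₁.height_eq_zero_iff.mp ?_)⟩
      rw [h, hb, F₂.height_root]
  constructor
  · intro τ hτ
    refine ⟨fun u v huv => ?_, fun u v huv => ?_, fun u => (τ u).2⟩
    · obtain ⟨hne, hpar⟩ := hτ huv
      exact ⟨(ne_root _ hne).1, congrArg (fun x => x.1.1) hpar⟩
    · obtain ⟨hne, hpar⟩ := hτ huv
      exact ⟨(ne_root _ hne).2, congrArg (fun x => x.1.2) hpar⟩
  constructor
  · intro τ _ σ _ h
    funext u
    apply Subtype.ext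
    exact Prod.ext (congrFun (congrArg Prod.fst h) u) (congrFun (congrArg Prod.snd h) u)
  · rintro ⟨τ₁, τ₂⟩ ⟨h1, h2, hh⟩
    refine ⟨fun u => ⟨(τ₁ u, τ₂ u), hh u⟩, fun u v huv => ?_, rfl⟩
    obtain ⟨ha, hpa⟩ := h1 huv
    obtain ⟨hb, hpb⟩ := h2 huv
    refine ⟨fun hc => ha (congrArg (fun x => x.1.1) hc), Subtype.ext ?_⟩
    show (τ₁ v, τ₂ v) = (F₁.parent (τ₁ u), F₂.parent (τ₂ u))
    exact Prod.ext hpa hpb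
end

section
/- For any finite in-trees F, X, and Y all of the same height, if the digraphs of the ⋆ products F ⋆ X and F ⋆ Y are isomorphic, then the digraphs of X and Y are isomorphic. -/
open DDS DDS.InTree

section StarCancelAux

namespace DDS
namespace InTree

universe u

variable {T T' A B : Type*}

/-- Height-preserving, parent-commuting maps between in-trees. -/
def HP (t : InTree T) (a : InTree A) (σ : T → A) : Prop :=
  (∀ x, σ (t.parent x) = a.parent (σ x)) ∧ ∀ x, a.height (σ x) = t.height x

noncomputable def hn (t : InTree T) (a : InTree A) : ℕ :=
  Nat.card {σ : T → A // HP t a σ}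

noncomputable def mn (t : InTree T) (a : InTree A) : ℕ :=
  Nat.card {σ : T → A // HP t a σ ∧ Function.Injective σ}

lemma height_iterate (t : InTree T) (v : T) :
    ∀ j, j ≤ t.height v → t.height (t.parent^[j] v) = t.height v - j := by
  intro j
  induction j with
  | zero => simp
  | succ j ih =>
      intro hj
      have hj' : j ≤ t.height v := by omega
      have h1 := ih hj'
      have hne : t.parent^[j] v ≠ t.root := by
        intro h
        rw [h, t.height_root] at h1
        omega
      rw [Function.iterate_succ_apply']
      have := t.height_parent hne
      omega

lemma height_le_treeHeight [Fintype T] (t : InTree T) (v : T) :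
    t.height v ≤ t.treeHeight :=
  Finset.le_sup (Finset.mem_univ v)

lemma exists_height_eq_treeHeight [Fintype T] (t : InTree T) :
    ∃ v, t.height v = t.treeHeight := by
  obtain ⟨v, -, hv⟩ := Finset.exists_mem_eq_sup Finset.univ
    ⟨t.root, Finset.mem_univ _⟩ t.height
  exact ⟨v, hv.symm⟩

/-- A parent-commuting, root preserving bijection preserves heights. -/
lemma height_of_comm (a : InTree A) (b : InTree B) (e : A ≃ B)
    (hp : ∀ x, e (a.parent x) = b.parent (e x)) (hr : e a.root = b.root) :
    ∀ x, b.height (e x) = a.height x := by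
  have key : ∀ k x, b.parent^[k] (e x) = e (a.parent^[k] x) := by
    intro k
    induction k with
    | zero => simp
    | succ k ih =>
        intro x
        rw [Function.iterate_succ_apply', Function.iterate_succ_apply', ih, hp]
  intro x
  unfold height
  congr 1
  ext k
  simp only [Set.mem_setOf_eq]
  constructor
  · intro h
    have h2 : e (a.parent^[k] x) = e a.root := by rw [← key, h, hr]
    exact e.injective h2
  · intro h
    rw [key, h, hr]

/-- An isomorphism of edge digraphs yields a parent-commuting root-preserving bijection. -/
lemma iso_pcb {a : InTree A} {b : InTree B} (h : Isomorphic a.Edge b.Edge) :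
    ∃ e : A ≃ B, (∀ x, e (a.parent x) = b.parent (e x)) ∧ e a.root = b.root := by
  obtain ⟨e, he⟩ := h
  have hroot : e a.root = b.root := by
    by_contra hne
    have h1 : b.Edge (e a.root) (e (e.symm (b.parent (e a.root)))) := by
      rw [e.apply_symm_apply]
      exact ⟨hne, rfl⟩
    have h2 := (he a.root (e.symm (b.parent (e a.root)))).mpr h1
    exact h2.1 rfl
  refine ⟨e, ?_, hroot⟩
  intro x
  by_cases hx : x = a.root
  · subst hx
    rw [a.parent_root, hroot, b.parent_root]
  · have := (he x (a.parent x)).mp ⟨hx, rfl⟩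
    exact this.2

/-- `hn` is invariant under parent-commuting bijections of the codomain. -/
lemma hn_congr_cod (t : InTree T) (a : InTree A) (b : InTree B) (e : A ≃ B)
    (hp : ∀ x, e (a.parent x) = b.parent (e x)) (hr : e a.root = b.root) :
    hn t a = hn t b := by
  have hp' : ∀ y, e.symm (b.parent y) = a.parent (e.symm y) := by
    intro y
    apply e.injective
    rw [hp, e.apply_symm_apply, e.apply_symm_apply]
  have hr' : e.symm b.root = a.root := by rw [← hr, e.symm_apply_apply]
  have hh := height_of_comm a b e hp hr
  have hh' := height_of_comm b a e.symm hp' hr'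
  apply Nat.card_congr
  refine ⟨fun σ => ⟨e ∘ σ.1, ?_, ?_⟩, fun σ => ⟨e.symm ∘ σ.1, ?_, ?_⟩, ?_, ?_⟩
  · intro x
    simp only [Function.comp_apply, σ.2.1 x, hp]
  · intro x
    simp only [Function.comp_apply, hh, σ.2.2 x]
  · intro x
    simp only [Function.comp_apply, σ.2.1 x, hp']
  · intro x
    simp only [Function.comp_apply, hh', σ.2.2 x]
  · intro σ
    apply Subtype.ext
    funext x
    simp
  · intro σ
    apply Subtype.ext
    funext x
    simp

/-- `mn` is invariant under parent-commuting bijections of the domain. -/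
lemma mn_congr_dom (t : InTree T) (t' : InTree T') (a : InTree A) (e : T ≃ T')
    (hp : ∀ x, e (t.parent x) = t'.parent (e x)) (hr : e t.root = t'.root) :
    mn t a = mn t' a := by
  have hp' : ∀ y, e.symm (t'.parent y) = t.parent (e.symm y) := by
    intro y
    apply e.injective
    rw [hp, e.apply_symm_apply, e.apply_symm_apply]
  have hr' : e.symm t'.root = t.root := by rw [← hr, e.symm_apply_apply]
  have hh := height_of_comm t t' e hp hr
  have hh' := height_of_comm t' t e.symm hp' hr'
  apply Nat.card_congr
  refine ⟨fun σ => ⟨σ.1 ∘ e.symm, ⟨?_, ?_⟩, σ.2.2.comp e.symm.injective⟩,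
    fun σ => ⟨σ.1 ∘ e, ⟨?_, ?_⟩, σ.2.2.comp e.injective⟩, ?_, ?_⟩
  · intro x
    simp only [Function.comp_apply, hp', σ.2.1.1]
  · intro x
    simp only [Function.comp_apply, σ.2.1.2, hh']
  · intro x
    simp only [Function.comp_apply, hp, σ.2.1.1]
  · intro x
    simp only [Function.comp_apply, σ.2.1.2, hh]
  · intro σ
    apply Subtype.ext
    funext x
    simp
  · intro σ
    apply Subtype.ext
    funext x
    simp

section StarLemmas

variable (T₁ : InTree A) (T₂ : InTree B)

lemma star_height (x : StarVertex T₁ T₂) :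
    (T₁.star T₂).height x = T₁.height x.1.1 := by
  apply le_antisymm
  · apply Nat.sInf_le
    show (T₁.star T₂).parent^[T₁.height x.1.1] x = (T₁.star T₂).root
    apply Subtype.ext
    show ((starParent T₁ T₂)^[T₁.height x.1.1] x).1 = (T₁.root, T₂.root)
    rw [starParent_iterate]
    have h2 : T₂.parent^[T₁.height x.1.1] x.1.2 = T₂.root := by
      rw [x.2]; exact T₂.height_spec _
    rw [T₁.height_spec, h2]
  · have hs := (T₁.star T₂).height_spec x
    have h1 : ((starParent T₁ T₂)^[(T₁.star T₂).height x] x).1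
        = (T₁.root, T₂.root) := congrArg Subtype.val hs
    rw [starParent_iterate] at h1
    have h2 : T₁.parent^[(T₁.star T₂).height x] x.1.1 = T₁.root := congrArg Prod.fst h1
    exact Nat.sInf_le h2

lemma hn_star (t : InTree T) : hn t (T₁.star T₂) = hn t T₁ * hn t T₂ := by
  simp only [hn]
  rw [← Nat.card_prod]
  apply Nat.card_congr
  refine ⟨fun σ => (⟨fun x => (σ.1 x).1.1, ?_, ?_⟩, ⟨fun x => (σ.1 x).1.2, ?_, ?_⟩),
    fun p => ⟨fun x => ⟨(p.1.1 x, p.2.1 x), by rw [p.1.2.2, p.2.2.2]⟩, ?_, ?_⟩, ?_, ?_⟩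
  · intro x
    exact congrArg (fun z => z.1.1) (σ.2.1 x)
  · intro x
    rw [← star_height T₁ T₂ (σ.1 x)]
    exact σ.2.2 x
  · intro x
    exact congrArg (fun z => z.1.2) (σ.2.1 x)
  · intro x
    rw [← (σ.1 x).2, ← star_height T₁ T₂ (σ.1 x)]
    exact σ.2.2 x
  · intro x
    apply Subtype.ext
    show (p.1.1 (t.parent x), p.2.1 (t.parent x))
      = (T₁.parent (p.1.1 x), T₂.parent (p.2.1 x))
    rw [p.1.2.1 x, p.2.2.1 x]
  · intro x
    refine (star_height T₁ T₂ _).trans ?_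
    exact p.1.2.2 x
  · intro σ
    apply Subtype.ext
    funext x
    apply Subtype.ext
    rfl
  · intro p
    rfl

end StarLemmas

lemma hn_pos [Fintype T] [Fintype A] (t : InTree T) (a : InTree A)
    (hle : t.treeHeight ≤ a.treeHeight) : 0 < hn t a := by
  obtain ⟨m, hm⟩ := exists_height_eq_treeHeight a
  set H := a.treeHeight with hH
  have hbound : ∀ x, t.height x ≤ H := fun x =>
    le_trans (height_le_treeHeight t x) hle
  have hτ : HP t a (fun x => a.parent^[H - t.height x] m) := by
    constructor
    · intro x
      by_cases hx : x = t.root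
      · subst hx
        rw [t.parent_root]
        show a.parent^[H - t.height t.root] m
          = a.parent (a.parent^[H - t.height t.root] m)
        rw [t.height_root]
        simp only [Nat.sub_zero]
        have hroot : a.parent^[H] m = a.root := by
          rw [← hm]; exact a.height_spec m
        rw [hroot, a.parent_root]
      · have hhp := t.height_parent hx
        have h1 : 1 ≤ t.height x := by omega
        have : H - t.height (t.parent x) = (H - t.height x) + 1 := by
          have := hbound x; omega
        show a.parent^[H - t.height (t.parent x)] m
          = a.parent (a.parent^[H - t.height x] m)
        rw [this, Function.iterate_succ_apply']
    · intro x
      have h1 : H - t.height x ≤ a.height m := by rw [hm]; omega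
      rw [height_iterate a m _ h1, hm]
      have := hbound x
      omega
  have : Nonempty {σ : T → A // HP t a σ} := ⟨⟨_, hτ⟩⟩
  exact Nat.card_pos

lemma hn_zero [Fintype T] [Fintype A] (t : InTree T) (a : InTree A)
    (hgt : a.treeHeight < t.treeHeight) : hn t a = 0 := by
  obtain ⟨v, hv⟩ := exists_height_eq_treeHeight t
  have : IsEmpty {σ : T → A // HP t a σ} := by
    constructor
    rintro ⟨σ, hσ⟩
    have h1 := hσ.2 v
    have h2 := height_le_treeHeight a (σ v)
    omega
  simp [hn, Nat.card_of_isEmpty]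

/-! ### Quotients -/

/-- A setoid compatible with an in-tree structure. -/
structure CSetoid (t : InTree T) where
  s : Setoid T
  hp : ∀ x y, s.r x y → s.r (t.parent x) (t.parent y)
  hh : ∀ x y, s.r x y → t.height x = t.height y

lemma CSetoid.ext' {t : InTree T} {c c' : CSetoid t} (h : c.s = c'.s) : c = c' := by
  cases c; cases c'; cases h; rfl

variable {t : InTree T}

lemma map_iterate (c : CSetoid t) (k : ℕ) (x : T) :
    (Quotient.map t.parent c.hp)^[k] (Quotient.mk c.s x) = Quotient.mk c.s (t.parent^[k] x) := by
  induction k generalizing x with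
  | zero => rfl
  | succ k ih =>
      rw [Function.iterate_succ_apply, Function.iterate_succ_apply, Quotient.map_mk, ih]

/-- The quotient in-tree. -/
def qt (c : CSetoid t) : InTree (Quotient c.s) where
  root := Quotient.mk c.s t.root
  parent := Quotient.map t.parent c.hp
  parent_root := by rw [Quotient.map_mk, t.parent_root]
  reaches_root := by
    intro v
    induction v using Quotient.ind with
    | _ x => exact ⟨t.height x, by rw [map_iterate, t.height_spec]⟩

lemma qt_height (c : CSetoid t) (x : T) :
    (qt c).height (Quotient.mk c.s x) = t.height x := by
  unfold height
  congr 1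
  ext k
  show (qt c).parent^[k] (Quotient.mk c.s x) = (qt c).root ↔ _
  rw [show (qt c).parent = Quotient.map t.parent c.hp from rfl, map_iterate]
  constructor
  · intro h
    have hrel : c.s.r (t.parent^[k] x) t.root := Quotient.exact h
    have := c.hh _ _ hrel
    rw [t.height_root] at this
    exact t.height_eq_zero_iff.mp this
  · intro h
    rw [h]
    rfl

noncomputable instance [Finite T] : Fintype (CSetoid t) := by
  have h1 : Finite (Setoid T) :=
    Finite.of_injective (fun s : Setoid T => s.r)
      (fun s s' h => by cases s; cases s'; cases h; rfl)
  have h2 : Finite (CSetoid t) :=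
    Finite.of_injective (fun c => c.s) (fun c c' h => CSetoid.ext' h)
  exact Fintype.ofFinite _

/-- The factorization bijection: homs `t → a` correspond to pairs of a compatible
setoid together with an injective hom from the quotient. -/
lemma hn_eq_sum [Fintype T] [Fintype A] (t : InTree T) (a : InTree A) :
    hn t a = ∑ c : CSetoid t, mn (qt c) a := by
  classical
  let Φ : (Σ c : CSetoid t, {j : Quotient c.s → A // HP (qt c) a j ∧ Function.Injective j}) →
      {σ : T → A // HP t a σ} :=
    fun p => ⟨p.2.1 ∘ Quotient.mk p.1.s, by
      constructor
      · intro x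
        have h1 : Quotient.mk p.1.s (t.parent x)
            = (qt p.1).parent (Quotient.mk p.1.s x) := by
          rw [show (qt p.1).parent = Quotient.map t.parent p.1.hp from rfl, Quotient.map_mk]
        show p.2.1 (Quotient.mk p.1.s (t.parent x)) = a.parent (p.2.1 (Quotient.mk p.1.s x))
        rw [h1, p.2.2.1.1]
      · intro x
        show a.height (p.2.1 (Quotient.mk p.1.s x)) = t.height x
        rw [p.2.2.1.2, qt_height]⟩
  have hinj : Function.Injective Φ := by
    rintro ⟨c, j⟩ ⟨c', j'⟩ h
    have hv : j.1 ∘ Quotient.mk c.s = j'.1 ∘ Quotient.mk c'.s := congrArg Subtype.val h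
    have hvx : ∀ x, j.1 (Quotient.mk c.s x) = j'.1 (Quotient.mk c'.s x) :=
      fun x => congrFun hv x
    have hc : c = c' := by
      apply CSetoid.ext'
      apply Setoid.ext
      intro x y
      constructor
      · intro hxy
        have h1 : j.1 (Quotient.mk c.s x) = j.1 (Quotient.mk c.s y) := by
          rw [Quotient.sound hxy]
        rw [hvx, hvx] at h1
        exact Quotient.exact (j'.2.2 h1)
      · intro hxy
        have h1 : j'.1 (Quotient.mk c'.s x) = j'.1 (Quotient.mk c'.s y) := by
          rw [Quotient.sound hxy]
        rw [← hvx, ← hvx] at h1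
        exact Quotient.exact (j.2.2 h1)
    subst hc
    have : j = j' := by
      apply Subtype.ext
      funext q
      induction q using Quotient.ind with
      | _ x => exact hvx x
    rw [this]
  have hsurj : Function.Surjective Φ := by
    rintro ⟨σ, hσ⟩
    set c : CSetoid t := ⟨⟨fun x y => σ x = σ y, ⟨fun _ => rfl, Eq.symm, Eq.trans⟩⟩,
      fun x y h => by show σ (t.parent x) = σ (t.parent y); rw [hσ.1, hσ.1, h],
      fun x y h => by rw [← hσ.2 x, ← hσ.2 y, h]⟩ with hcdef
    refine ⟨⟨c, ⟨Quotient.lift σ (fun x y h => h), ⟨?_, ?_⟩, ?_⟩⟩, rfl⟩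
    · intro q
      induction q using Quotient.ind with
      | _ x =>
        have h1 : (qt c).parent (Quotient.mk c.s x) = Quotient.mk c.s (t.parent x) :=
          map_iterate c 1 x
        rw [h1]
        show σ (t.parent x) = a.parent (σ x)
        exact hσ.1 x
    · intro q
      induction q using Quotient.ind with
      | _ x =>
        rw [qt_height]
        exact hσ.2 x
    · intro q q' h
      induction q using Quotient.ind with
      | _ x =>
        induction q' using Quotient.ind with
        | _ y => exact Quotient.sound h
  have hcard := Nat.card_congr (Equiv.ofBijective Φ ⟨hinj, hsurj⟩)
  rw [hn, ← hcard]
  haveI : ∀ c : CSetoid t,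
      Fintype {j : Quotient c.s → A // HP (qt c) a j ∧ Function.Injective j} :=
    fun c => Fintype.ofFinite _
  rw [Nat.card_eq_fintype_card, Fintype.card_sigma]
  apply Finset.sum_congr rfl
  intro c _
  rw [mn, Nat.card_eq_fintype_card]

/-- The equality compatible setoid. -/
def cbot (t : InTree T) : CSetoid t where
  s := ⟨Eq, ⟨fun _ => rfl, Eq.symm, Eq.trans⟩⟩
  hp := fun x y h => by rw [h]
  hh := fun x y h => by rw [h]

lemma mn_qt_cbot [Fintype A] (a : InTree A) : mn (qt (cbot t)) a = mn t a := by
  have hbij : Function.Bijective (Quotient.mk (cbot t).s) := by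
    constructor
    · intro x y h
      exact Quotient.exact h
    · intro q
      induction q using Quotient.ind with
      | _ x => exact ⟨x, rfl⟩
  refine (mn_congr_dom t (qt (cbot t)) a (Equiv.ofBijective _ hbij) ?_ rfl).symm
  intro x
  exact (map_iterate (cbot t) 1 x).symm

lemma csetoid_ne_cbot {c : CSetoid t} (h : c ≠ cbot t) :
    ∃ x y, c.s.r x y ∧ x ≠ y := by
  by_contra hc
  push_neg at hc
  apply h
  apply CSetoid.ext'
  apply Setoid.ext
  intro x y
  constructor
  · intro hxy
    by_cases hne : x = y
    · exact hne
    · exact absurd hxy (by simpa [hne] using hc x y)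
  · intro hxy
    have hxy' : x = y := hxy
    subst hxy'
    exact c.s.iseqv.refl x

/-- The Lovász-style induction: if `hn (-, x) = hn (-, y)` on a universe, then
`mn (-, x) = mn (-, y)` on that universe. -/
lemma mono_eq {A : Type*} {B : Type*} [Fintype A] [Fintype B] (x : InTree A) (y : InTree B)
    (H : ∀ (S : Type u) [Fintype S] (s : InTree S), hn s x = hn s y) :
    ∀ (S : Type u) [Fintype S] (s : InTree S), mn s x = mn s y := by
  suffices h : ∀ (N : ℕ) (S : Type u) [Fintype S] (s : InTree S),
      Nat.card S ≤ N → mn s x = mn s y by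
    intro S _ s
    exact h (Nat.card S) S s le_rfl
  intro N
  induction N with
  | zero =>
      intro S _ s hle
      haveI : Nonempty S := ⟨s.root⟩
      have : 0 < Nat.card S := Nat.card_pos
      omega
  | succ N ih =>
      intro S _ s hle
      classical
      have hx := hn_eq_sum s x
      have hy := hn_eq_sum s y
      rw [← Finset.add_sum_erase _ (fun c => mn (qt c) x) (Finset.mem_univ (cbot s))] at hx
      rw [← Finset.add_sum_erase _ (fun c => mn (qt c) y) (Finset.mem_univ (cbot s))] at hy
      rw [mn_qt_cbot] at hx hy
      have hsum : ∑ c ∈ Finset.univ.erase (cbot s), mn (qt c) x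
          = ∑ c ∈ Finset.univ.erase (cbot s), mn (qt c) y := by
        apply Finset.sum_congr rfl
        intro c hc
        have hne : c ≠ cbot s := Finset.ne_of_mem_erase hc
        obtain ⟨u, v, huv, hne'⟩ := csetoid_ne_cbot hne
        haveI : Fintype (Quotient c.s) := Fintype.ofFinite _
        have hlt : Fintype.card (Quotient c.s) < Fintype.card S := by
          apply Fintype.card_lt_of_surjective_not_injective (Quotient.mk c.s)
          · intro q
            induction q using Quotient.ind with
            | _ z => exact ⟨z, rfl⟩
          · intro hinj
            exact hne' (hinj (Quotient.sound huv))
        have hcard : Nat.card (Quotient c.s) ≤ N := by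
          have h1 : Nat.card S ≤ N + 1 := hle
          have hq : Nat.card (Quotient c.s) = Fintype.card (Quotient c.s) :=
            Nat.card_eq_fintype_card
          have hs' : Nat.card S = Fintype.card S := Nat.card_eq_fintype_card
          omega
        exact ih (Quotient c.s) (qt c) hcard
      have hH := H S s
      omega

lemma cancel_hn {V : Type*} {V₁ : Type*} {V₂ : Type*} [Fintype V] [Fintype V₁] [Fintype V₂]
    (F : InTree V) (X : InTree V₁) (Y : InTree V₂)
    (h₁ : F.treeHeight = X.treeHeight) (h₂ : X.treeHeight = Y.treeHeight)
    (hiso : Isomorphic (F.star X).Edge (F.star Y).Edge) :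
    ∀ (S : Type u) [Fintype S] (s : InTree S), hn s X = hn s Y := by
  intro S _ s
  obtain ⟨e, hp, hr⟩ := iso_pcb hiso
  have h0 : hn s (F.star X) = hn s (F.star Y) := hn_congr_cod s _ _ e hp hr
  rw [hn_star, hn_star] at h0
  by_cases hle : s.treeHeight ≤ F.treeHeight
  · exact Nat.eq_of_mul_eq_mul_left (hn_pos s F hle) h0
  · rw [hn_zero s X (by omega), hn_zero s Y (by omega)]

end InTree
end DDS

end StarCancelAux


/-- Cancellation for finite in-trees: if `F`, `X`, `Y` are finite in-trees of the same height
and `F ⋆ X ≅ F ⋆ Y`, then `X ≅ Y`. -/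
theorem star_cancel_finite {V V₁ V₂ : Type*} [Fintype V] [Fintype V₁] [Fintype V₂]
    (F : InTree V) (X : InTree V₁) (Y : InTree V₂)
    (h₁ : F.treeHeight = X.treeHeight) (h₂ : X.treeHeight = Y.treeHeight)
    (hiso : Isomorphic (F.star X).Edge (F.star Y).Edge) :
    Isomorphic X.Edge Y.Edge := by
  have m1 : mn X X = mn X Y := mono_eq X Y (cancel_hn F X Y h₁ h₂ hiso) V₁ X
  have m2 : mn Y X = mn Y Y := mono_eq X Y (cancel_hn F X Y h₁ h₂ hiso) V₂ Y
  have hidX : 0 < mn X X := by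
    have : Nonempty {σ : V₁ → V₁ // HP X X σ ∧ Function.Injective σ} :=
      ⟨⟨id, ⟨fun _ => rfl, fun _ => rfl⟩, fun _ _ h => h⟩⟩
    exact Nat.card_pos
  have hidY : 0 < mn Y Y := by
    have : Nonempty {σ : V₂ → V₂ // HP Y Y σ ∧ Function.Injective σ} :=
      ⟨⟨id, ⟨fun _ => rfl, fun _ => rfl⟩, fun _ _ h => h⟩⟩
    exact Nat.card_pos
  obtain ⟨⟨σ⟩, -⟩ := Nat.card_pos_iff.mp (show 0 < mn X Y by rw [← m1]; exact hidX)
  obtain ⟨⟨σ'⟩, -⟩ := Nat.card_pos_iff.mp (show 0 < mn Y X by rw [m2]; exact hidY)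
  have hcard : Fintype.card V₁ = Fintype.card V₂ :=
    le_antisymm (Fintype.card_le_of_injective σ.1 σ.2.2)
      (Fintype.card_le_of_injective σ'.1 σ'.2.2)
  have hbij : Function.Bijective σ.1 :=
    (Fintype.bijective_iff_injective_and_card σ.1).mpr ⟨σ.2.2, hcard⟩
  have hroot : σ.1 X.root = Y.root :=
    Y.height_eq_zero_iff.mp (by rw [σ.2.1.2, X.height_root])
  refine ⟨Equiv.ofBijective σ.1 hbij, ?_⟩
  intro u v
  show X.Edge u v ↔ Y.Edge (σ.1 u) (σ.1 v)
  constructor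
  · rintro ⟨hu, rfl⟩
    refine ⟨?_, σ.2.1.1 u⟩
    intro h
    exact hu (σ.2.2 (by rw [h, hroot]))
  · rintro ⟨hu, hv⟩
    refine ⟨?_, ?_⟩
    · intro h
      exact hu (by rw [h, hroot])
    · apply σ.2.2
      rw [hv, ← σ.2.1.1 u]
end

section
/- For any locally finite infinite in-trees I, X, and Y, if the digraphs of the ⋆ products I ⋆ X and I ⋆ Y are isomorphic, then the digraphs of X and Y are isomorphic. -/
open DDS DDS.InTree
namespace Aux

open DDS DDS.InTree Function

/-! ### Graded systems -/

structure GSys (α : Type*) where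
  p : α → α
  h : α → ℕ
  hp : ∀ v, h (p v) = h v - 1

namespace GSys

variable {α β γ α' : Type*}

/-- Height- and parent-preserving maps. -/
def IsH (A : GSys α) (B : GSys β) (τ : α → β) : Prop :=
  (∀ v, τ (A.p v) = B.p (τ v)) ∧ (∀ v, B.h (τ v) = A.h v)

noncomputable def homN (A : GSys α) (B : GSys β) : ℕ := Nat.card {τ // A.IsH B τ}

noncomputable def injN (A : GSys α) (B : GSys β) : ℕ :=
  Nat.card {τ // A.IsH B τ ∧ Function.Injective τ}

def FinLvl (B : GSys β) : Prop := ∀ n, {v | B.h v = n}.Finite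

lemma homFinite [Finite α] (A : GSys α) (B : GSys β) (hB : B.FinLvl) :
    Finite {τ // A.IsH B τ} := by
  have : ∀ v : α, Finite {w : β // B.h w = A.h v} := fun v => (hB (A.h v)).to_subtype
  apply Finite.of_injective
    (fun τ : {τ // A.IsH B τ} => fun v : α => (⟨τ.1 v, τ.2.2 v⟩ : {w : β // B.h w = A.h v}))
  intro τ τ' hττ'
  ext v
  exact congrArg Subtype.val (congrFun hττ' v)

lemma injFinite [Finite α] (A : GSys α) (B : GSys β) (hB : B.FinLvl) :
    Finite {τ // A.IsH B τ ∧ Function.Injective τ} := by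
  have := homFinite A B hB
  apply Finite.of_injective
    (fun τ : {τ // A.IsH B τ ∧ Function.Injective τ} => (⟨τ.1, τ.2.1⟩ : {τ // A.IsH B τ}))
  intro τ τ' hh
  rcases τ with ⟨t, ht⟩; rcases τ' with ⟨t', ht'⟩
  simp only [Subtype.mk.injEq] at hh ⊢
  exact hh

lemma isH_comp {A : GSys α} {B : GSys β} {C : GSys γ} {τ : α → β} {σ : β → γ}
    (hτ : A.IsH B τ) (hσ : B.IsH C σ) : A.IsH C (σ ∘ τ) :=
  ⟨fun v => by simp [Function.comp, hτ.1 v, hσ.1 (τ v)],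
   fun v => by simp [Function.comp, hσ.2 (τ v), hτ.2 v]⟩

lemma isH_symm {B : GSys β} {C : GSys γ} (e : β ≃ γ) (he : B.IsH C e) : C.IsH B e.symm := by
  constructor
  · intro w
    apply e.injective
    rw [he.1 (e.symm w)]
    simp
  · intro w
    rw [← he.2 (e.symm w)]
    simp

/-- Transfer hom sets along an isomorphism of targets. -/
noncomputable def homEquivTarget (A : GSys α) {B : GSys β} {C : GSys γ} (e : β ≃ γ)
    (he : B.IsH C e) : {τ // A.IsH B τ} ≃ {τ // A.IsH C τ} where
  toFun τ := ⟨e ∘ τ.1, isH_comp τ.2 he⟩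
  invFun τ := ⟨e.symm ∘ τ.1, isH_comp τ.2 (isH_symm e he)⟩
  left_inv τ := by ext v; simp
  right_inv τ := by ext v; simp

/-- Transfer inj sets along an isomorphism of sources. -/
noncomputable def injEquivSource {A : GSys α} {A' : GSys α'} (B : GSys β) (e : α ≃ α')
    (he : A.IsH A' e) : {τ // A.IsH B τ ∧ Function.Injective τ} ≃
      {τ // A'.IsH B τ ∧ Function.Injective τ} where
  toFun τ := ⟨τ.1 ∘ e.symm, isH_comp (isH_symm e he) τ.2.1,
    τ.2.2.comp e.symm.injective⟩
  invFun τ := ⟨τ.1 ∘ e, isH_comp he τ.2.1, τ.2.2.comp e.injective⟩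
  left_inv τ := by ext v; simp
  right_inv τ := by ext v; simp

end GSys

end Aux
namespace Aux
open DDS DDS.InTree Function

variable {V V₁ V₂ : Type*}

lemma iterate_root (T : InTree V) (k : ℕ) : T.parent^[k] T.root = T.root := by
  induction k with
  | zero => rfl
  | succ k ih => rw [Function.iterate_succ_apply, T.parent_root, ih]

lemma height_le_iff (T : InTree V) {v : V} {k : ℕ} :
    T.height v ≤ k ↔ T.parent^[k] v = T.root := by
  constructor
  · intro hk
    have : T.parent^[k] v = T.parent^[k - T.height v] (T.parent^[T.height v] v) := by
      rw [← Function.iterate_add_apply]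
      congr 1
      omega
    rw [this, T.height_spec, iterate_root]
  · intro hk
    exact Nat.sInf_le hk

lemma height_iterate (T : InTree V) (v : V) (j : ℕ) :
    T.height (T.parent^[j] v) = T.height v - j := by
  induction j with
  | zero => simp
  | succ j ih =>
      rw [Function.iterate_succ_apply']
      have hb : ∀ w, T.height (T.parent w) = T.height w - 1 := by
        intro w
        by_cases hw : w = T.root
        · subst hw; simp [T.parent_root]
        · rw [T.height_parent hw]; omega
      rw [hb, ih]
      omega

/-- The level sets of an in-tree. -/
def lvl (T : InTree V) (n : ℕ) : Set V := {v | T.height v = n}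

lemma lvl_finite (T : InTree V) (hT : ∀ w, {v | v ≠ T.root ∧ T.parent v = w}.Finite) (n : ℕ) :
    (lvl T n).Finite := by
  induction n with
  | zero =>
      apply Set.Finite.subset (Set.finite_singleton T.root)
      intro v hv
      exact T.height_eq_zero_iff.mp hv
  | succ n ih =>
      have : lvl T (n + 1) ⊆ ⋃ w ∈ lvl T n, {v | v ≠ T.root ∧ T.parent v = w} := by
        intro v hv
        have hvr : v ≠ T.root := by
          intro h; subst h; simp [lvl] at hv
        have hp : T.height (T.parent v) = n := by
          have := T.height_parent hvr
          have hv' : T.height v = n + 1 := hv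
          omega
        exact Set.mem_biUnion hp ⟨hvr, rfl⟩
      exact Set.Finite.subset (Set.Finite.biUnion ih fun w _ => hT w) this

lemma cut_finite (T : InTree V) (hT : ∀ w, {v | v ≠ T.root ∧ T.parent v = w}.Finite) (n : ℕ) :
    Finite (CutVertex T n) := by
  have : {v | T.height v ≤ n}.Finite := by
    have : {v | T.height v ≤ n} ⊆ ⋃ m ∈ Finset.range (n+1), lvl T m := by
      intro v hv
      exact Set.mem_biUnion (Finset.mem_range.mpr (Nat.lt_succ_of_le hv)) rfl
    exact Set.Finite.subset (Set.Finite.biUnion (Finset.range (n+1)).finite_toSet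
      fun m _ => lvl_finite T hT m) this
  exact this.to_subtype

lemma lvl_nonempty (T : InTree V) [Infinite V]
    (hT : ∀ w, {v | v ≠ T.root ∧ T.parent v = w}.Finite) (n : ℕ) :
    ∃ v, T.height v = n := by
  have hbig : ∃ v, n ≤ T.height v := by
    by_contra hc
    push_neg at hc
    have : (Set.univ : Set V) ⊆ ⋃ m ∈ Finset.range n, lvl T m := by
      intro v _
      exact Set.mem_biUnion (Finset.mem_range.mpr (hc v)) rfl
    have : (Set.univ : Set V).Finite :=
      Set.Finite.subset (Set.Finite.biUnion (Finset.range n).finite_toSet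
        fun m _ => lvl_finite T hT m) this
    exact Set.infinite_univ this
  obtain ⟨v, hv⟩ := hbig
  refine ⟨T.parent^[T.height v - n] v, ?_⟩
  rw [height_iterate]
  omega

/-! ### In-trees as graded systems -/

noncomputable def sys (T : InTree V) : GSys V where
  p := T.parent
  h := T.height
  hp := fun v => by
    by_cases hv : v = T.root
    · subst hv; simp [T.parent_root]
    · rw [T.height_parent hv]; omega

noncomputable def starSys (I : InTree V) (X : InTree V₁) : GSys (StarVertex I X) where
  p := starParent I X
  h := fun x => I.height x.1.1
  hp := fun x => (sys I).hp x.1.1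

lemma star_height (I : InTree V) (X : InTree V₁) (x : StarVertex I X) :
    (I.star X).height x = I.height x.1.1 := by
  apply le_antisymm
  · rw [height_le_iff]
    apply Subtype.ext
    show ((I.star X).parent^[I.height x.1.1] x).1 = (I.root, X.root)
    have : (I.star X).parent^[I.height x.1.1] x = (starParent I X)^[I.height x.1.1] x := rfl
    rw [this, starParent_iterate]
    have h1 : I.parent^[I.height x.1.1] x.1.1 = I.root := I.height_spec _
    have h2 : X.parent^[I.height x.1.1] x.1.2 = X.root := by
      rw [← height_le_iff, ← x.2]
    rw [h1, h2]
  · rw [height_le_iff ]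
    have hs := (I.star X).height_spec x
    have : ((I.star X).parent^[(I.star X).height x] x).1
        = (I.parent^[(I.star X).height x] x.1.1, X.parent^[(I.star X).height x] x.1.2) :=
      starParent_iterate I X _ x
    rw [hs] at this
    exact ((Prod.ext_iff.mp this).1).symm

/-- The cut of a tree as a graded system. -/
noncomputable def cutSys (T : InTree V) (n : ℕ) : GSys (CutVertex T n) where
  p := cutParent T n
  h := fun v => T.height v.1
  hp := fun v => (sys T).hp v.1

/-- Paths as graded systems. -/
def pathSys (n : ℕ) : GSys (Fin (n+1)) where
  p := fun k => ⟨k.1 - 1, lt_of_le_of_lt (Nat.sub_le _ _) k.2⟩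
  h := fun k => k.1
  hp := fun k => rfl

end Aux
namespace Aux
open DDS DDS.InTree Function CategoryTheory Opposite

variable {V V₁ V₂ : Type*}

/-- The inverse system of levels of an in-tree. -/
noncomputable def lvlFunctor (T : InTree V) : ℕᵒᵖ ⥤ Type _ where
  obj n := {v : V // T.height v = n.unop}
  map {n m} f := TypeCat.ofHom fun v => ⟨T.parent^[n.unop - m.unop] v.1, by
    rw [height_iterate, v.2]
    have := leOfHom f.unop
    omega⟩
  map_id n := by
    refine ConcreteCategory.hom_ext _ _ fun v => ?_
    apply Subtype.ext
    simp
  map_comp {n m k} f g := by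
    have h1 := leOfHom f.unop
    have h2 := leOfHom g.unop
    refine ConcreteCategory.hom_ext _ _ fun v => ?_
    apply Subtype.ext
    show T.parent^[n.unop - k.unop] v.1 = T.parent^[m.unop - k.unop] (T.parent^[n.unop - m.unop] v.1)
    rw [← Function.iterate_add_apply]
    congr 1
    omega

/-- Existence of an infinite branch in a locally finite infinite in-tree. -/
lemma exists_branch (T : InTree V) [Infinite V]
    (hT : ∀ w, {v | v ≠ T.root ∧ T.parent v = w}.Finite) :
    ∃ β : ℕ → V, (∀ n, T.height (β n) = n) ∧ ∀ n, T.parent (β (n+1)) = β n := by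
  have hfin : ∀ n : ℕᵒᵖ, Finite ((lvlFunctor T).obj n) := fun n => (lvl_finite T hT n.unop).to_subtype
  have hne : ∀ n : ℕᵒᵖ, Nonempty ((lvlFunctor T).obj n) := fun n => by
    obtain ⟨v, hv⟩ := lvl_nonempty T hT n.unop
    exact ⟨⟨v, hv⟩⟩
  obtain ⟨u, hu⟩ := nonempty_sections_of_finite_inverse_system (lvlFunctor T)
  refine ⟨fun n => (u (op n)).1, fun n => (u (op n)).2, fun n => ?_⟩
  show T.parent ((u (op (n+1))).1) = (u (op n)).1
  have h1 := hu ((homOfLE (Nat.le_succ n)).op)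
  have h3 : (u (op n)).1 = T.parent (u (op (n+1))).1 := by
    rw [← h1]
    show T.parent^[n+1-n] (u (op (n+1))).1 = _
    simp
  exact h3.symm

section homI
variable {α : Type*} (A : GSys α)

lemma hom_to_tree_pos (T : InTree V) [Infinite V] [Finite α]
    (hT : ∀ w, {v | v ≠ T.root ∧ T.parent v = w}.Finite) :
    1 ≤ GSys.homN A (sys T) := by
  obtain ⟨β, hβh, hβp⟩ := exists_branch T hT
  have hβ0 : β 0 = T.root := T.height_eq_zero_iff.mp (hβh 0)
  have : A.IsH (sys T) (fun v => β (A.h v)) := by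
    constructor
    · intro v
      show β (A.h (A.p v)) = T.parent (β (A.h v))
      rw [A.hp v]
      rcases Nat.eq_zero_or_pos (A.h v) with h0 | hpos
      · rw [h0]
        simp [hβ0, T.parent_root]
      · obtain ⟨k, hk⟩ := Nat.exists_eq_succ_of_ne_zero (Nat.pos_iff_ne_zero.mp hpos)
        rw [hk]
        simp [hβp k]
    · intro v
      exact hβh (A.h v)
  have hfin : Finite {τ // A.IsH (sys T) τ} :=
    GSys.homFinite A (sys T) (fun n => lvl_finite T hT n)
  have hne : Nonempty {τ // A.IsH (sys T) τ} := ⟨⟨_, this⟩⟩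
  exact Nat.one_le_iff_ne_zero.mpr (Nat.card_ne_zero.mpr ⟨hne, hfin⟩)

/-- Hom sets into a star product split as a product. -/
noncomputable def homStarEquiv (I : InTree V) (X : InTree V₁) :
    {τ // A.IsH (starSys I X) τ} ≃ {τ // A.IsH (sys I) τ} × {τ // A.IsH (sys X) τ} where
  toFun τ := ⟨⟨fun v => (τ.1 v).1.1,
      fun v => congrArg (fun z : StarVertex I X => z.1.1) (τ.2.1 v),
      fun v => τ.2.2 v⟩,
    ⟨fun v => (τ.1 v).1.2,
      fun v => congrArg (fun z : StarVertex I X => z.1.2) (τ.2.1 v),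
      fun v => ((τ.1 v).2.symm).trans (τ.2.2 v)⟩⟩
  invFun σ := ⟨fun v => ⟨(σ.1.1 v, σ.2.1 v), (σ.1.2.2 v).trans (σ.2.2.2 v).symm⟩,
    fun v => Subtype.ext (Prod.ext (σ.1.2.1 v) (σ.2.2.1 v)),
    fun v => σ.1.2.2 v⟩
  left_inv τ := by
    apply Subtype.ext
    funext v
    apply Subtype.ext
    rfl
  right_inv σ := by
    apply Prod.ext <;> apply Subtype.ext <;> rfl

/-- Homs from a path count the level. -/
noncomputable def homPathEquiv (T : InTree V) (n : ℕ) :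
    {τ // (pathSys n).IsH (sys T) τ} ≃ {v : V // T.height v = n} where
  toFun τ := ⟨τ.1 ⟨n, Nat.lt_succ_self n⟩, τ.2.2 _⟩
  invFun v := ⟨fun k => T.parent^[n - k.1] v.1, by
    constructor
    · intro k
      show T.parent^[n - (k.1 - 1)] v.1 = T.parent (T.parent^[n - k.1] v.1)
      have hstep : T.parent^[(n - k.1) + 1] v.1 = T.parent (T.parent^[n - k.1] v.1) :=
        Function.iterate_succ_apply' _ _ _
      rw [← hstep]
      rcases Nat.eq_zero_or_pos k.1 with h0 | hpos
      · have hr : T.parent^[n] v.1 = T.root := by rw [← height_le_iff, v.2]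
        rw [h0]
        simp only [Nat.sub_zero, Nat.zero_sub]
        rw [hr, Function.iterate_succ_apply', hr, T.parent_root]
      · congr 1
        have := k.2
        omega
    · intro k
      show T.height (T.parent^[n - k.1] v.1) = k.1
      rw [height_iterate, v.2]
      have := k.2
      omega⟩
  left_inv τ := by
    apply Subtype.ext
    funext k
    show T.parent^[n - k.1] (τ.1 ⟨n, _⟩) = τ.1 k
    have key : ∀ j : ℕ, ∀ k : Fin (n+1), j + k.1 = n →
        T.parent^[j] (τ.1 ⟨n, Nat.lt_succ_self n⟩) = τ.1 k := by
      intro j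
      induction j with
      | zero =>
          intro k hk
          have : k = ⟨n, Nat.lt_succ_self n⟩ := by
            apply Fin.ext
            simpa using hk
          rw [this]
          rfl
      | succ j ih =>
          intro k hk
          rw [Function.iterate_succ_apply', ih ⟨k.1 + 1, by omega⟩ (by show j + (k.1 + 1) = n; omega)]
          have h4 : (⟨(k.1 + 1) - 1, by omega⟩ : Fin (n+1)) = k := Fin.ext (by simp)
          calc T.parent (τ.1 ⟨k.1 + 1, by omega⟩)
              = τ.1 ⟨(k.1 + 1) - 1, by omega⟩ := (τ.2.1 ⟨k.1 + 1, by omega⟩).symm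
            _ = τ.1 k := by rw [h4]
    apply key
    have := k.2
    omega
  right_inv v := by
    apply Subtype.ext
    show T.parent^[n - n] v.1 = v.1
    simp

end homI
end Aux
namespace Aux
open DDS DDS.InTree Function

universe u
variable {V V₁ V₂ : Type*}

section iso
variable {γ δ : Type*} {S : InTree γ} {U : InTree δ} (e : γ ≃ δ)
  (he : ∀ u v, S.Edge u v ↔ U.Edge (e u) (e v))

include he

lemma iso_root : e S.root = U.root := by
  by_contra hne
  have h1 : U.Edge (e S.root) (U.parent (e S.root)) := ⟨hne, rfl⟩
  have h2 : U.parent (e S.root) = e (e.symm (U.parent (e S.root))) := by simp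
  rw [h2, ← he] at h1
  exact h1.1 rfl

lemma iso_parent (v : γ) : e (S.parent v) = U.parent (e v) := by
  by_cases hv : v = S.root
  · subst hv
    rw [S.parent_root, iso_root e he, U.parent_root]
  · exact ((he v (S.parent v)).mp ⟨hv, rfl⟩).2

lemma iso_parent_iterate (k : ℕ) (v : γ) : e (S.parent^[k] v) = U.parent^[k] (e v) := by
  induction k generalizing v with
  | zero => rfl
  | succ k ih => rw [Function.iterate_succ_apply', Function.iterate_succ_apply',
      iso_parent e he, ih]

lemma iso_height (v : γ) : U.height (e v) = S.height v := by
  apply le_antisymm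
  · rw [height_le_iff, ← iso_parent_iterate e he, S.height_spec, iso_root e he]
  · rw [height_le_iff]
    apply e.injective
    rw [iso_parent_iterate e he, U.height_spec, iso_root e he]

end iso

lemma star_isH (I : InTree V) (X : InTree V₁) (Y : InTree V₂)
    (e : StarVertex I X ≃ StarVertex I Y)
    (he : ∀ u v, (I.star X).Edge u v ↔ (I.star Y).Edge (e u) (e v)) :
    (starSys I X).IsH (starSys I Y) e := by
  constructor
  · intro x
    exact iso_parent (S := I.star X) (U := I.star Y) e he x
  · intro x
    show I.height (e x).1.1 = I.height x.1.1
    rw [← star_height I Y (e x), ← star_height I X x]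
    exact iso_height (S := I.star X) (U := I.star Y) e he x

/-- The master hom-count equality. -/
lemma hom_eq [Infinite V] (I : InTree V) (X : InTree V₁) (Y : InTree V₂)
    (hI : ∀ w, {v | v ≠ I.root ∧ I.parent v = w}.Finite)
    (hX : ∀ w, {v | v ≠ X.root ∧ X.parent v = w}.Finite)
    (hY : ∀ w, {v | v ≠ Y.root ∧ Y.parent v = w}.Finite)
    (e : StarVertex I X ≃ StarVertex I Y)
    (he : ∀ u v, (I.star X).Edge u v ↔ (I.star Y).Edge (e u) (e v))
    {α : Type u} [Finite α] (A : GSys α) :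
    GSys.homN A (sys X) = GSys.homN A (sys Y) := by
  have hprodX : Nat.card {τ // A.IsH (starSys I X) τ}
      = GSys.homN A (sys I) * GSys.homN A (sys X) := by
    rw [Nat.card_congr (homStarEquiv A I X), Nat.card_prod]; rfl
  have hprodY : Nat.card {τ // A.IsH (starSys I Y) τ}
      = GSys.homN A (sys I) * GSys.homN A (sys Y) := by
    rw [Nat.card_congr (homStarEquiv A I Y), Nat.card_prod]; rfl
  have htrans : Nat.card {τ // A.IsH (starSys I X) τ}
      = Nat.card {τ // A.IsH (starSys I Y) τ} :=
    Nat.card_congr (GSys.homEquivTarget A e (star_isH I X Y e he))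
  have hpos := hom_to_tree_pos A I hI
  rw [hprodX, hprodY] at htrans
  exact Nat.eq_of_mul_eq_mul_left hpos htrans

end Aux
namespace Aux
namespace GSys
open Function

universe u
variable {α β : Type*} (A : GSys α) (B : GSys β)

/-- Congruences of a graded system. -/
def Cong : Type _ :=
  {s : Setoid α // (∀ v w, s v w → s (A.p v) (A.p w)) ∧ (∀ v w, s v w → A.h v = A.h w)}

lemma cong_finite [Finite α] : Finite (Cong A) := by
  classical
  have : Finite (Setoid α) := by
    apply Finite.of_injective (fun s : Setoid α => fun v w : α => decide (s v w))
    intro s t hst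
    ext v w
    have h2 : decide (s v w) = decide (t v w) := congrFun (congrFun hst v) w
    constructor
    · intro h
      exact of_decide_eq_true (h2 ▸ decide_eq_true h)
    · intro h
      exact of_decide_eq_true (h2.symm ▸ decide_eq_true h)
  exact Finite.of_injective (Subtype.val : Cong A → Setoid α) Subtype.val_injective

/-- Quotient of a graded system by a congruence. -/
noncomputable def quotSys (s : Cong A) : GSys (Quotient s.1) where
  p := Quotient.map A.p (fun a b hab => s.2.1 a b hab)
  h := Quotient.lift A.h (fun a b hab => s.2.2 a b hab)
  hp := by
    rintro ⟨v⟩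
    exact A.hp v

/-- The kernel congruence of a hom. -/
def ker (τ : {τ // A.IsH B τ}) : Cong A :=
  ⟨Setoid.ker τ.1,
    fun v w hvw => show τ.1 (A.p v) = τ.1 (A.p w) by
      rw [τ.2.1 v, τ.2.1 w]
      exact congrArg B.p hvw,
    fun v w hvw => by
      rw [← τ.2.2 v, ← τ.2.2 w]
      exact congrArg B.h hvw⟩

/-- Homs with a given kernel correspond to injective homs of the quotient. -/
noncomputable def fiberEquiv (s : Cong A) :
    {τ : {τ // A.IsH B τ} // ker A B τ = s} ≃
      {ι : Quotient s.1 → β // (quotSys A s).IsH B ι ∧ Function.Injective ι} where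
  toFun τ := by
    refine ⟨Quotient.lift τ.1.1 (fun a b hab => ?_), ⟨?_, ?_⟩, ?_⟩
    · have hab' : (ker A B τ.1).1 a b := by rw [τ.2]; exact hab
      exact hab'
    · rintro ⟨v⟩
      exact τ.1.2.1 v
    · rintro ⟨v⟩
      exact τ.1.2.2 v
    · rintro ⟨a⟩ ⟨b⟩ hab
      apply Quotient.sound
      have : (ker A B τ.1).1 a b := hab
      rw [τ.2] at this
      exact this
  invFun ι := ⟨⟨fun v => ι.1 ⟦v⟧, fun v => ι.2.1.1 ⟦v⟧, fun v => ι.2.1.2 ⟦v⟧⟩, by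
    apply Subtype.ext
    apply Setoid.ext
    intro a b
    show ι.1 ⟦a⟧ = ι.1 ⟦b⟧ ↔ s.1 a b
    constructor
    · intro h
      exact Quotient.eq.mp (ι.2.2 h)
    · intro h
      exact congrArg ι.1 (Quotient.sound h)⟩
  left_inv τ := by
    apply Subtype.ext
    apply Subtype.ext
    rfl
  right_inv ι := by
    apply Subtype.ext
    funext q
    induction q using Quotient.ind
    rfl

lemma nat_card_sigma {ι : Type*} [Fintype ι] (F : ι → Type*) [∀ i, Finite (F i)] :
    Nat.card ((i : ι) × F i) = ∑ i, Nat.card (F i) := by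
  letI : ∀ i, Fintype (F i) := fun i => Fintype.ofFinite _
  simp [Nat.card_eq_fintype_card, Fintype.card_sigma]

lemma hom_card_eq [Finite α] [Fintype (Cong A)] (hB : B.FinLvl) :
    A.homN B = ∑ s : Cong A, (quotSys A s).injN B := by
  classical
  have hfin : Finite {τ // A.IsH B τ} := homFinite A B hB
  have : A.homN B = Nat.card ((s : Cong A) × {τ : {τ // A.IsH B τ} // ker A B τ = s}) :=
    (Nat.card_congr (Equiv.sigmaFiberEquiv (ker A B))).symm
  rw [this]
  have hfib : ∀ s : Cong A, Finite {τ : {τ // A.IsH B τ} // ker A B τ = s} := fun s =>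
    Subtype.finite
  rw [nat_card_sigma]
  apply Finset.sum_congr rfl
  intro s _
  exact Nat.card_congr (fiberEquiv A B s)

/-- The bottom congruence. -/
def botCong : Cong A :=
  ⟨⊥, fun v w hvw => by
      have h : v = w := hvw
      subst h
      exact (⊥ : Setoid α).iseqv.refl _,
    fun v w hvw => by
      have h : v = w := hvw
      subst h
      rfl⟩

noncomputable def botEquiv : α ≃ Quotient (botCong A).1 := by
  apply Equiv.ofBijective (Quotient.mk (botCong A).1)
  constructor
  · intro a b hab
    exact Quotient.eq.mp hab
  · intro q
    obtain ⟨a, ha⟩ := Quotient.exists_rep q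
    exact ⟨a, ha⟩

lemma botEquiv_isH : A.IsH (quotSys A (botCong A)) (botEquiv A) :=
  ⟨fun v => rfl, fun v => rfl⟩

lemma injN_bot : (quotSys A (botCong A)).injN B = A.injN B :=
  (Nat.card_congr (injEquivSource B (botEquiv A) (botEquiv_isH A))).symm

lemma card_quot_lt [Finite α] (s : Cong A) (hs : s ≠ botCong A) :
    Nat.card (Quotient s.1) < Nat.card α := by
  classical
  letI : Fintype α := Fintype.ofFinite α
  have hex : ∃ v w : α, v ≠ w ∧ s.1 v w := by
    by_contra hc
    push_neg at hc
    apply hs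
    apply Subtype.ext
    apply Setoid.ext
    intro a b
    constructor
    · intro h
      show a = b
      by_contra hne
      exact hc a b hne h
    · intro h
      have hab : a = b := h
      subst hab
      exact s.1.iseqv.refl _
  obtain ⟨v, w, hvw, hrel⟩ := hex
  rw [Nat.card_eq_fintype_card, Nat.card_eq_fintype_card]
  apply Fintype.card_lt_of_surjective_not_injective (Quotient.mk s.1)
  · intro q
    exact Quotient.exists_rep q
  · intro hinj
    exact hvw (hinj (Quotient.sound hrel))

end GSys
end Aux
namespace Aux
namespace GSys
open Function

universe u
variable {β₁ β₂ : Type*}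

lemma inj_eq (B₁ : GSys β₁) (B₂ : GSys β₂) (hB₁ : B₁.FinLvl) (hB₂ : B₂.FinLvl)
    (H : ∀ {α : Type u} [Finite α] (A : GSys α), A.homN B₁ = A.homN B₂) :
    ∀ {α : Type u} [Finite α] (A : GSys α), A.injN B₁ = A.injN B₂ := by
  suffices h : ∀ n : ℕ, ∀ {α : Type u} [Finite α] (A : GSys α), Nat.card α = n →
      A.injN B₁ = A.injN B₂ by
    intro α _ A
    exact h (Nat.card α) A rfl
  intro n
  induction n using Nat.strong_induction_on with
  | _ n ih =>
    intro α _ A hcard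
    classical
    haveI : Finite (Cong A) := cong_finite A
    letI : Fintype (Cong A) := Fintype.ofFinite _
    have h1 := hom_card_eq A B₁ hB₁
    have h2 := hom_card_eq A B₂ hB₂
    have hsum : ∑ s : Cong A, (quotSys A s).injN B₁ = ∑ s : Cong A, (quotSys A s).injN B₂ := by
      rw [← h1, ← h2]
      exact H A
    have hterm : ∀ s : Cong A, s ≠ botCong A →
        (quotSys A s).injN B₁ = (quotSys A s).injN B₂ := by
      intro s hs
      have hlt : Nat.card (Quotient s.1) < n := hcard ▸ card_quot_lt A s hs
      haveI : Finite (Quotient s.1) := Quotient.finite _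
      exact ih _ hlt (quotSys A s) rfl
    rw [← Finset.add_sum_erase _ _ (Finset.mem_univ (botCong A)),
        ← Finset.add_sum_erase _ _ (Finset.mem_univ (botCong A))] at hsum
    have heq : ∑ s ∈ Finset.univ.erase (botCong A), (quotSys A s).injN B₁
        = ∑ s ∈ Finset.univ.erase (botCong A), (quotSys A s).injN B₂ :=
      Finset.sum_congr rfl fun s hs => hterm s (Finset.ne_of_mem_erase hs)
    rw [heq] at hsum
    have hbot : (quotSys A (botCong A)).injN B₁ = (quotSys A (botCong A)).injN B₂ :=
      Nat.add_right_cancel hsum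
    rw [← injN_bot A B₁, ← injN_bot A B₂, hbot]

end GSys
end Aux
namespace Aux
open DDS DDS.InTree Function

variable {V V₁ V₂ : Type*}

noncomputable def cutSigmaEquiv (T : InTree V) (n : ℕ) :
    CutVertex T n ≃ ((h : Fin (n+1)) × {v : V // T.height v = h.1}) where
  toFun v := ⟨⟨T.height v.1, Nat.lt_succ_of_le v.2⟩, ⟨v.1, rfl⟩⟩
  invFun x := ⟨x.2.1, by rw [x.2.2]; exact Nat.lt_succ_iff.mp x.1.2⟩
  left_inv v := by apply Subtype.ext; rfl
  right_inv x := by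
    rcases x with ⟨⟨h, hh⟩, v, hv⟩
    have hv' : T.height v = h := hv
    subst hv'
    rfl

lemma cut_card_eq (X : InTree V₁) (Y : InTree V₂)
    (hX : ∀ w, {v | v ≠ X.root ∧ X.parent v = w}.Finite)
    (hY : ∀ w, {v | v ≠ Y.root ∧ Y.parent v = w}.Finite)
    (hlvl : ∀ m : ℕ, Nat.card {v : V₁ // X.height v = m} = Nat.card {v : V₂ // Y.height v = m})
    (n : ℕ) : Nat.card (CutVertex X n) = Nat.card (CutVertex Y n) := by
  classical
  have finX : ∀ h : Fin (n+1), Finite {v : V₁ // X.height v = h.1} :=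
    fun h => (lvl_finite X hX h.1).to_subtype
  have finY : ∀ h : Fin (n+1), Finite {v : V₂ // Y.height v = h.1} :=
    fun h => (lvl_finite Y hY h.1).to_subtype
  rw [Nat.card_congr (cutSigmaEquiv X n), Nat.card_congr (cutSigmaEquiv Y n),
    GSys.nat_card_sigma, GSys.nat_card_sigma]
  exact Finset.sum_congr rfl fun h _ => hlvl h.1

lemma exists_cut_bij (X : InTree V₁) (Y : InTree V₂)
    (hX : ∀ w, {v | v ≠ X.root ∧ X.parent v = w}.Finite)
    (hY : ∀ w, {v | v ≠ Y.root ∧ Y.parent v = w}.Finite)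
    (hlvl : ∀ m : ℕ, Nat.card {v : V₁ // X.height v = m} = Nat.card {v : V₂ // Y.height v = m})
    (hinj : ∀ n : ℕ, 1 ≤ (cutSys X n).injN (sys Y))
    (n : ℕ) :
    ∃ φ : CutVertex X n → CutVertex Y n,
      ((cutSys X n).IsH (cutSys Y n) φ) ∧ Function.Bijective φ := by
  classical
  haveI : Finite (CutVertex X n) := cut_finite X hX n
  haveI : Finite (CutVertex Y n) := cut_finite Y hY n
  have hpos := hinj n
  have hne : Nonempty {τ // (cutSys X n).IsH (sys Y) τ ∧ Function.Injective τ} := by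
    rcases Nat.card_pos_iff.mp (lt_of_lt_of_le Nat.zero_lt_one hpos) with ⟨hne, _⟩
    exact hne
  obtain ⟨τ, hτ, hτinj⟩ := hne.some
  have hht : ∀ v : CutVertex X n, Y.height (τ v) = X.height v.1 := fun v => hτ.2 v
  refine ⟨fun v => ⟨τ v, by rw [hht v]; exact v.2⟩, ⟨?_, ?_⟩, ?_⟩
  · intro v
    apply Subtype.ext
    exact hτ.1 v
  · intro v
    exact hht v
  · letI : Fintype (CutVertex X n) := Fintype.ofFinite _
    letI : Fintype (CutVertex Y n) := Fintype.ofFinite _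
    apply (Fintype.bijective_iff_injective_and_card _).mpr
    constructor
    · intro v w hvw
      exact hτinj (congrArg Subtype.val hvw)
    · have := cut_card_eq X Y hX hY hlvl n
      rwa [Nat.card_eq_fintype_card, Nat.card_eq_fintype_card] at this

end Aux
namespace Aux
open DDS DDS.InTree Function CategoryTheory Opposite

variable {V₁ V₂ : Type*}

/-- A coherent family of partial isomorphisms up to height `n`. -/
structure GoodFam (X : InTree V₁) (Y : InTree V₂) (n : ℕ) (s : V₁ → Option V₂) : Prop where
  defined : ∀ v, X.height v ≤ n → ∃ y, s v = some y ∧ Y.height y = X.height v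
  undef : ∀ v, ¬ X.height v ≤ n → s v = none
  par : ∀ v, X.height v ≤ n → s (X.parent v) = (s v).map Y.parent
  inj : ∀ v w y, s v = some y → s w = some y → v = w
  surj : ∀ y, Y.height y ≤ n → ∃ v, s v = some y

variable (X : InTree V₁) (Y : InTree V₂)

/-- Truncation of a partial family. -/
noncomputable def trunc (m : ℕ) (s : V₁ → Option V₂) : V₁ → Option V₂ :=
  fun v => if X.height v ≤ m then s v else none

lemma good_trunc {m n : ℕ} (hmn : m ≤ n) {s : V₁ → Option V₂} (hs : GoodFam X Y n s) :
    GoodFam X Y m (trunc X m s) := by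
  constructor
  · intro v hv
    obtain ⟨y, hy, hyh⟩ := hs.defined v (hv.trans hmn)
    exact ⟨y, by rw [trunc, if_pos hv]; exact hy, hyh⟩
  · intro v hv
    rw [trunc, if_neg hv]
  · intro v hv
    have hpv : X.height (X.parent v) ≤ m := (X.height_parent_le v).trans hv
    rw [trunc, trunc, if_pos hpv, if_pos hv]
    exact hs.par v (hv.trans hmn)
  · intro v w y hv hw
    rw [trunc] at hv hw
    by_cases h1 : X.height v ≤ m
    · by_cases h2 : X.height w ≤ m
      · rw [if_pos h1] at hv
        rw [if_pos h2] at hw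
        exact hs.inj v w y hv hw
      · rw [if_neg h2] at hw; exact absurd hw (by simp)
    · rw [if_neg h1] at hv; exact absurd hv (by simp)
  · intro y hy
    obtain ⟨v, hv⟩ := hs.surj y (hy.trans hmn)
    have hvn : X.height v ≤ n := by
      by_contra hc
      rw [hs.undef v hc] at hv
      exact absurd hv (by simp)
    obtain ⟨y', hy', hyh⟩ := hs.defined v hvn
    rw [hv] at hy'
    have : y = y' := by injection hy'
    have hvm : X.height v ≤ m := by rw [← hyh, ← this]; exact hy
    exact ⟨v, by rw [trunc, if_pos hvm]; exact hv⟩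

lemma trunc_self {n : ℕ} {s : V₁ → Option V₂} (hs : GoodFam X Y n s) : trunc X n s = s := by
  funext v
  rw [trunc]
  by_cases h : X.height v ≤ n
  · rw [if_pos h]
  · rw [if_neg h, hs.undef v h]

lemma trunc_trunc {m n : ℕ} (hmn : m ≤ n) (s : V₁ → Option V₂) :
    trunc X m (trunc X n s) = trunc X m s := by
  funext v
  rw [trunc, trunc, trunc]
  by_cases h : X.height v ≤ m
  · rw [if_pos h, if_pos h, if_pos (h.trans hmn)]
  · rw [if_neg h, if_neg h]

/-- The inverse system of coherent partial isomorphism families. -/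
noncomputable def goodFunctor : ℕᵒᵖ ⥤ Type _ where
  obj n := {s : V₁ → Option V₂ // GoodFam X Y n.unop s}
  map {n m} f := TypeCat.ofHom fun s => ⟨trunc X m.unop s.1, good_trunc X Y (leOfHom f.unop) s.2⟩
  map_id n := by
    refine ConcreteCategory.hom_ext _ _ fun s => ?_
    exact Subtype.ext (trunc_self X Y s.2)
  map_comp {n m k} f g := by
    refine ConcreteCategory.hom_ext _ _ fun s => ?_
    exact Subtype.ext (trunc_trunc X (leOfHom g.unop) s.1).symm

lemma goodFunctor_finite
    (hX : ∀ w, {v | v ≠ X.root ∧ X.parent v = w}.Finite)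
    (hY : ∀ w, {v | v ≠ Y.root ∧ Y.parent v = w}.Finite)
    (n : ℕᵒᵖ) : Finite ((goodFunctor X Y).obj n) := by
  classical
  haveI : Finite (CutVertex X n.unop) := cut_finite X hX n.unop
  haveI : Finite (CutVertex Y n.unop) := cut_finite Y hY n.unop
  haveI : Finite {v : V₁ // X.height v ≤ n.unop} := cut_finite X hX n.unop
  haveI : Finite {v : V₂ // Y.height v ≤ n.unop} := cut_finite Y hY n.unop
  letI : Fintype {v : V₂ // Y.height v ≤ n.unop} := Fintype.ofFinite _
  haveI : Finite (Option {v : V₂ // Y.height v ≤ n.unop}) := inferInstance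
  apply Finite.of_injective (fun s : (goodFunctor X Y).obj n =>
    fun v : CutVertex X n.unop =>
      (s.1 v.1).bind (fun y => if h : Y.height y ≤ n.unop then some (⟨y, h⟩ : CutVertex Y n.unop)
        else none))
  intro s s' hss'
  apply Subtype.ext
  funext v
  by_cases hv : X.height v ≤ n.unop
  · obtain ⟨y, hy, hyh⟩ := s.2.defined v hv
    obtain ⟨y', hy', hyh'⟩ := s'.2.defined v hv
    have hyn : Y.height y ≤ n.unop := by rw [hyh]; exact hv
    have hyn' : Y.height y' ≤ n.unop := by rw [hyh']; exact hv
    have hthis : (s.1 v).bind (fun z => if h : Y.height z ≤ n.unop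
          then some (⟨z, h⟩ : {w : V₂ // Y.height w ≤ n.unop}) else none)
        = (s'.1 v).bind (fun z => if h : Y.height z ≤ n.unop then some ⟨z, h⟩ else none) :=
      congrFun hss' ⟨v, hv⟩
    rw [hy, hy'] at hthis
    have h5 : (if h : Y.height y ≤ n.unop
          then some (⟨y, h⟩ : {w : V₂ // Y.height w ≤ n.unop}) else none)
        = (if h : Y.height y' ≤ n.unop then some ⟨y', h⟩ else none) := hthis
    rw [dif_pos hyn, dif_pos hyn'] at h5
    have hyy : y = y' := congrArg Subtype.val (Option.some.inj h5)
    rw [hy, hy', hyy]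
  · rw [s.2.undef v hv, s'.2.undef v hv]

/-- Gluing compatible cut bijections into a global isomorphism. -/
lemma glue
    (hX : ∀ w, {v | v ≠ X.root ∧ X.parent v = w}.Finite)
    (hY : ∀ w, {v | v ≠ Y.root ∧ Y.parent v = w}.Finite)
    (hbij : ∀ n : ℕ, ∃ φ : CutVertex X n → CutVertex Y n,
      ((cutSys X n).IsH (cutSys Y n) φ) ∧ Function.Bijective φ) :
    Isomorphic X.Edge Y.Edge := by
  classical
  haveI := goodFunctor_finite X Y hX hY
  have hne : ∀ n : ℕᵒᵖ, Nonempty ((goodFunctor X Y).obj n) := by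
    intro n
    obtain ⟨φ, hφ, hφb⟩ := hbij n.unop
    refine ⟨⟨fun v => if h : X.height v ≤ n.unop then some (φ ⟨v, h⟩).1 else none, ?_, ?_, ?_, ?_, ?_⟩⟩
    · intro v hv
      exact ⟨(φ ⟨v, hv⟩).1, by rw [dif_pos hv], hφ.2 ⟨v, hv⟩⟩
    · intro v hv
      rw [dif_neg hv]
    · intro v hv
      have hpv : X.height (X.parent v) ≤ n.unop := (X.height_parent_le v).trans hv
      rw [dif_pos hv, dif_pos hpv]
      have h1 : (⟨X.parent v, hpv⟩ : CutVertex X n.unop) = (cutSys X n.unop).p ⟨v, hv⟩ :=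
        Subtype.ext rfl
      rw [h1, hφ.1 ⟨v, hv⟩]
      rfl
    · intro v w y hv hw
      by_cases h1 : X.height v ≤ n.unop
      · by_cases h2 : X.height w ≤ n.unop
        · rw [dif_pos h1] at hv
          rw [dif_pos h2] at hw
          have : φ ⟨v, h1⟩ = φ ⟨w, h2⟩ := by
            apply Subtype.ext
            rw [Option.some.injEq] at hv hw
            rw [hv, hw]
          exact congrArg Subtype.val (hφb.1 this)
        · rw [dif_neg h2] at hw; exact absurd hw (by simp)
      · rw [dif_neg h1] at hv; exact absurd hv (by simp)
    · intro y hy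
      obtain ⟨c, hc⟩ := hφb.2 ⟨y, hy⟩
      refine ⟨c.1, ?_⟩
      rw [dif_pos c.2]
      have : (⟨c.1, c.2⟩ : CutVertex X n.unop) = c := Subtype.ext rfl
      rw [this, hc]
  obtain ⟨u, hu⟩ := nonempty_sections_of_finite_inverse_system (goodFunctor X Y)
  set t : ℕ → V₁ → Option V₂ := fun n => (u (op n)).1 with ht
  have good : ∀ n, GoodFam X Y n (t n) := fun n => (u (op n)).2
  have compat : ∀ {m n : ℕ}, m ≤ n → ∀ v, X.height v ≤ m → t n v = t m v := by
    intro m n hmn v hv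
    have := hu ((homOfLE hmn).op)
    have h2 : trunc X m (t n) = t m := congrArg Subtype.val this
    rw [← h2, trunc, if_pos hv]
  have hdef : ∀ v, ∃ y, t (X.height v) v = some y ∧ Y.height y = X.height v :=
    fun v => (good (X.height v)).defined v le_rfl
  set Φ : V₁ → V₂ := fun v => Classical.choose (hdef v) with hΦ
  have hΦspec : ∀ v, t (X.height v) v = some (Φ v) ∧ Y.height (Φ v) = X.height v :=
    fun v => Classical.choose_spec (hdef v)
  have key : ∀ n v, X.height v ≤ n → t n v = some (Φ v) := by
    intro n v hvn
    rw [compat hvn v le_rfl]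
    exact (hΦspec v).1
  have hheight : ∀ v, Y.height (Φ v) = X.height v := fun v => (hΦspec v).2
  have hpar : ∀ v, Φ (X.parent v) = Y.parent (Φ v) := by
    intro v
    set n := X.height v with hn
    have h1 : t n (X.parent v) = (t n v).map Y.parent := (good n).par v le_rfl
    rw [key n v le_rfl] at h1
    rw [key n (X.parent v) ((X.height_parent_le v).trans le_rfl)] at h1
    simpa using h1
  have hinj : Function.Injective Φ := by
    intro v w hvw
    have h1 := key (max (X.height v) (X.height w)) v (le_max_left _ _)
    have h2 := key (max (X.height v) (X.height w)) w (le_max_right _ _)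
    rw [hvw] at h1
    exact (good _).inj v w (Φ w) h1 h2
  have hsurj : Function.Surjective Φ := by
    intro y
    obtain ⟨v, hv⟩ := (good (Y.height y)).surj y le_rfl
    have hvh : X.height v ≤ Y.height y := by
      by_contra hc
      rw [(good (Y.height y)).undef v hc] at hv
      exact absurd hv (by simp)
    have := key (Y.height y) v hvh
    rw [hv] at this
    exact ⟨v, by injection this with h; exact h.symm⟩
  refine ⟨Equiv.ofBijective Φ ⟨hinj, hsurj⟩, ?_⟩
  intro a b
  show X.Edge a b ↔ Y.Edge (Φ a) (Φ b)
  constructor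
  · rintro ⟨ha, rfl⟩
    refine ⟨?_, (hpar a)⟩
    intro hc
    apply ha
    apply X.height_eq_zero_iff.mp
    rw [← hheight a, hc, Y.height_root]
  · rintro ⟨ha, hb⟩
    constructor
    · intro hc
      apply ha
      subst hc
      apply Y.height_eq_zero_iff.mp
      rw [hheight X.root, X.height_root]
    · apply hinj
      rw [hb, hpar a]
end Aux

open Aux

/-- Cancellation for locally finite infinite in-trees: if `I ⋆ X ≅ I ⋆ Y`, then `X ≅ Y`. -/
theorem star_cancel_infinite {V V₁ V₂ : Type*} [Infinite V] [Infinite V₁] [Infinite V₂]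
    (I : InTree V) (X : InTree V₁) (Y : InTree V₂)
    (hI : ∀ w, {v | v ≠ I.root ∧ I.parent v = w}.Finite)
    (hX : ∀ w, {v | v ≠ X.root ∧ X.parent v = w}.Finite)
    (hY : ∀ w, {v | v ≠ Y.root ∧ Y.parent v = w}.Finite)
    (hiso : Isomorphic (I.star X).Edge (I.star Y).Edge) :
    Isomorphic X.Edge Y.Edge := by
  classical
  obtain ⟨e, he⟩ := hiso
  have hlvl : ∀ m : ℕ, Nat.card {v : V₁ // X.height v = m}
      = Nat.card {v : V₂ // Y.height v = m} := by
    intro m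
    rw [← Nat.card_congr (homPathEquiv X m), ← Nat.card_congr (homPathEquiv Y m)]
    exact hom_eq I X Y hI hX hY e he (pathSys m)
  have hposX : ∀ n : ℕ, 1 ≤ (cutSys X n).injN (sys X) := by
    intro n
    haveI : Finite (CutVertex X n) := cut_finite X hX n
    have hfin : Finite {τ // (cutSys X n).IsH (sys X) τ ∧ Function.Injective τ} :=
      GSys.injFinite _ _ (fun m => lvl_finite X hX m)
    have hval : (cutSys X n).IsH (sys X) (Subtype.val) := ⟨fun v => rfl, fun v => rfl⟩
    exact Nat.one_le_iff_ne_zero.mpr (Nat.card_ne_zero.mpr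
      ⟨⟨⟨_, hval, Subtype.val_injective⟩⟩, hfin⟩)
  have hinj : ∀ n : ℕ, 1 ≤ (cutSys X n).injN (sys Y) := by
    intro n
    haveI : Finite (CutVertex X n) := cut_finite X hX n
    have heq := GSys.inj_eq (sys X) (sys Y) (fun m => lvl_finite X hX m)
      (fun m => lvl_finite Y hY m)
      (fun {α} _ A => hom_eq I X Y hI hX hY e he A) (cutSys X n)
    rw [← heq]
    exact hposX n
  exact glue X Y hX hY (exists_cut_bij X Y hX hY hlvl hinj)
end

section
/- The ⋆ product of unrolls is the unroll of the product: let f : α → α and h : γ → γ be maps on finite types, let a be a periodic point of f and x a periodic point of h. Then (a,x) is a periodic point of the product map f × h : α × γ → α × γ, (u,w) ↦ (f u, h w), and the digraph of U(f,a) ⋆ U(h,x) is isomorphic to the digraph of the unroll U(f × h, (a,x)). -/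
open DDS DDS.InTree

namespace DDS

lemma prodMap_iterate {α γ : Type*} (f : α → α) (h : γ → γ) (n : ℕ) (z : α × γ) :
    (prodMap f h)^[n] z = (f^[n] z.1, h^[n] z.2) := by
  induction n generalizing z with
  | zero => simp
  | succ n ih => rw [Function.iterate_succ_apply, ih]; rfl

lemma unrollParent_iter_le {α : Type*} (f : α → α) (v : α) :
    ∀ (k i : ℕ), k ≤ i → ∀ (u : α) (hu : f^[i] u = v),
      ((unrollParent f v)^[k] ⟨(u, i), hu⟩).1 = (f^[k] u, i - k) := by
  intro k
  induction k with
  | zero => intro i _ u hu; simp; rfl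
  | succ k ih =>
      intro i hk u hu
      cases i with
      | zero => omega
      | succ i =>
          rw [Function.iterate_succ_apply]
          have hp : unrollParent f v ⟨(u, i + 1), hu⟩
              = ⟨(f u, i), by rw [← Function.iterate_succ_apply]; exact hu⟩ := rfl
          show ((unrollParent f v)^[k] (unrollParent f v ⟨(u, i + 1), hu⟩)).1 = (f^[k] (f u), i + 1 - (k + 1))
          rw [hp, ih i (by omega) (f u) _]
          rw [← Function.iterate_succ_apply f k u]
          simp

lemma unroll_height {α : Type*} (f : α → α) (v : α) (u : α) (i : ℕ) (hu : f^[i] u = v) :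
    (unroll f v).height ⟨(u, i), hu⟩ = i := by
  apply le_antisymm
  · exact Nat.sInf_le (unrollParent_iterate f v i u hu)
  · apply le_csInf ((unroll f v).reaches_root _)
    intro k hk
    by_contra hlt
    push_neg at hlt
    have := unrollParent_iter_le f v k i hlt.le u hu
    have h2 : ((unroll f v).parent^[k] ⟨(u, i), hu⟩).1.2 = ((unroll f v).root).1.2 := by
      rw [hk]
    rw [show (unroll f v).parent = unrollParent f v from rfl, this] at h2
    have hr : ((unroll f v).root).1.2 = 0 := rfl
    rw [hr] at h2
    simp at h2
    omega

namespace StarUnroll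

variable {α γ : Type*} (f : α → α) (h : γ → γ) (a : α) (x : γ)

lemma star_idx_eq (z : StarVertex (unroll f a) (unroll h x)) :
    z.1.1.1.2 = z.1.2.1.2 := by
  have h1 : (unroll f a).height z.1.1 = z.1.1.1.2 :=
    unroll_height f a z.1.1.1.1 z.1.1.1.2 z.1.1.2
  have h2 : (unroll h x).height z.1.2 = z.1.2.1.2 :=
    unroll_height h x z.1.2.1.1 z.1.2.1.2 z.1.2.2
  have h3 := z.2
  omega

def fwd (z : StarVertex (unroll f a) (unroll h x)) :
    UnrollVertex (prodMap f h) (a, x) :=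
  ⟨((z.1.1.1.1, z.1.2.1.1), z.1.1.1.2), by
    rw [prodMap_iterate]
    have h1 := z.1.1.2
    have h2 := z.1.2.2
    have hij := star_idx_eq f h a x z
    simp only at h1 h2 ⊢
    rw [h1, hij, h2]⟩

def bwd (z : UnrollVertex (prodMap f h) (a, x)) :
    StarVertex (unroll f a) (unroll h x) :=
  ⟨(⟨(z.1.1.1, z.1.2), by
      have := z.2
      rw [prodMap_iterate] at this
      exact congrArg Prod.fst this⟩,
    ⟨(z.1.1.2, z.1.2), by
      have := z.2
      rw [prodMap_iterate] at this
      exact congrArg Prod.snd this⟩), by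
    show (unroll f a).height _ = (unroll h x).height _
    rw [unroll_height, unroll_height]⟩

def starProdEquiv : StarVertex (unroll f a) (unroll h x) ≃
    UnrollVertex (prodMap f h) (a, x) where
  toFun := fwd f h a x
  invFun := bwd f h a x
  left_inv := fun z => by
    apply Subtype.ext
    have hij := star_idx_eq f h a x z
    obtain ⟨⟨⟨⟨u, i⟩, hu⟩, ⟨⟨w, j⟩, hw⟩⟩, hh⟩ := z
    simp only at hij
    subst hij
    rfl
  right_inv := fun z => rfl

lemma fwd_root :
    fwd f h a x ((unroll f a).star (unroll h x)).root
      = (unroll (prodMap f h) (a, x)).root := rfl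

lemma fwd_parent (z : StarVertex (unroll f a) (unroll h x)) :
    fwd f h a x (((unroll f a).star (unroll h x)).parent z)
      = (unroll (prodMap f h) (a, x)).parent (fwd f h a x z) := by
  have hij := star_idx_eq f h a x z
  obtain ⟨⟨⟨⟨u, i⟩, hu⟩, ⟨⟨w, j⟩, hw⟩⟩, hh⟩ := z
  simp only at hij
  subst hij
  apply Subtype.ext
  cases i with
  | zero => rfl
  | succ i => rfl

end StarUnroll

end DDS

/-- The `⋆` product of unrolls is the unroll of the product: for periodic points `a` of `f`
and `x` of `h`, the pair `(a, x)` is periodic for `f × h` and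
`U(f, a) ⋆ U(h, x) ≅ U(f × h, (a, x))`. -/
theorem star_unroll_iso_unroll_prod {α γ : Type*} [Fintype α] [Fintype γ]
    (f : α → α) (h : γ → γ) (a : α) (x : γ)
    (ha : ∃ n, 1 ≤ n ∧ f^[n] a = a) (hx : ∃ n, 1 ≤ n ∧ h^[n] x = x) :
    (∃ n, 1 ≤ n ∧ (prodMap f h)^[n] (a, x) = (a, x)) ∧
      Isomorphic ((unroll f a).star (unroll h x)).Edge
        (unroll (prodMap f h) (a, x)).Edge := by
  constructor
  · obtain ⟨n, hn, hfa⟩ := ha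
    obtain ⟨m, hm, hhx⟩ := hx
    refine ⟨n * m, Nat.one_le_iff_ne_zero.mpr (by positivity), ?_⟩
    rw [prodMap_iterate]
    have h1 : f^[n * m] a = a := by
      rw [Function.iterate_mul]
      exact Function.iterate_fixed hfa m
    have h2 : h^[n * m] x = x := by
      rw [mul_comm, Function.iterate_mul]
      exact Function.iterate_fixed hhx n
    simp [h1, h2]
  · refine ⟨StarUnroll.starProdEquiv f h a x, fun u v => ?_⟩
    have hinj : Function.Injective (StarUnroll.fwd f h a x) :=
      (StarUnroll.starProdEquiv f h a x).injective
    have hco : ⇑(StarUnroll.starProdEquiv f h a x) = StarUnroll.fwd f h a x := rfl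
    rw [hco]
    show _ ∧ _ ↔ _ ∧ _
    constructor
    · rintro ⟨h1, rfl⟩
      refine ⟨?_, ?_⟩
      · intro hc
        apply h1
        apply hinj
        rw [StarUnroll.fwd_root]
        exact hc
      · exact StarUnroll.fwd_parent f h a x u
    · rintro ⟨h1, h2⟩
      refine ⟨?_, ?_⟩
      · intro hc
        apply h1
        rw [hc]
        exact StarUnroll.fwd_root f h a x
      · apply hinj
        rw [h2]
        exact (StarUnroll.fwd_parent f h a x u).symm
end

section
/- A connected finite functional graph is determined, up to isomorphism, by any one of its unrolls together with its cycle length: let f : α → α and g : β → β be connected FGs on finite nonempty types having the same number of periodic points, let a be a periodic point of f and b a periodic point of g. If the digraphs of the unrolls U(f,a) and U(g,b) are isomorphic, then the FGs f and g are isomorphic. -/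
open DDS DDS.InTree

set_option linter.unusedSectionVars false
namespace RollAux

open Function DDS DDS.InTree

/-! ### Generic in-tree lemmas -/

section Tree

variable {V₁ V₂ : Type*} {T₁ : DDS.InTree V₁} {T₂ : DDS.InTree V₂} {e : V₁ ≃ V₂}

/-- A vertex with ancestors at every depth. -/
def Deep {V : Type*} (T : DDS.InTree V) (v : V) : Prop := ∀ n, ∃ w, T.parent^[n] w = v

lemma deep_root {V : Type*} (T : DDS.InTree V) : Deep T T.root :=
  fun n => ⟨T.root, Function.iterate_fixed T.parent_root n⟩

lemma e_root (he : ∀ u v, T₁.Edge u v ↔ T₂.Edge (e u) (e v)) : e T₁.root = T₂.root := by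
  by_contra h
  have h3 : T₁.Edge T₁.root (e.symm (T₂.parent (e T₁.root))) := by
    rw [he]
    rw [e.apply_symm_apply]
    exact ⟨h, rfl⟩
  exact h3.1 rfl

lemma e_parent (he : ∀ u v, T₁.Edge u v ↔ T₂.Edge (e u) (e v)) (v : V₁) :
    e (T₁.parent v) = T₂.parent (e v) := by
  by_cases hv : v = T₁.root
  · subst hv
    rw [T₁.parent_root, e_root he, T₂.parent_root]
  · exact (((he v (T₁.parent v)).mp ⟨hv, rfl⟩).2)

lemma e_parent_iter (he : ∀ u v, T₁.Edge u v ↔ T₂.Edge (e u) (e v)) (k : ℕ) (v : V₁) :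
    e (T₁.parent^[k] v) = T₂.parent^[k] (e v) := by
  induction k generalizing v with
  | zero => rfl
  | succ k ih =>
      rw [Function.iterate_succ_apply, Function.iterate_succ_apply, ih, e_parent he]

lemma e_height (he : ∀ u v, T₁.Edge u v ↔ T₂.Edge (e u) (e v)) (v : V₁) :
    T₂.height (e v) = T₁.height v := by
  show sInf _ = sInf _
  congr 1
  ext k
  simp only [Set.mem_setOf_eq]
  rw [← e_parent_iter he, ← e_root he]
  exact ⟨fun h => e.injective h, fun h => by rw [h]⟩

lemma e_deep (he : ∀ u v, T₁.Edge u v ↔ T₂.Edge (e u) (e v)) (v : V₁) :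
    Deep T₂ (e v) ↔ Deep T₁ v := by
  constructor
  · intro hd n
    obtain ⟨w, hw⟩ := hd n
    refine ⟨e.symm w, e.injective ?_⟩
    rw [e_parent_iter he, e.apply_symm_apply, hw]
  · intro hd n
    obtain ⟨w, hw⟩ := hd n
    exact ⟨e w, by rw [← e_parent_iter he, hw]⟩

end Tree

/-! ### Functional graph lemmas -/

section FG

variable {α : Type*} [Fintype α] (f : α → α) (a : α)

lemma reach_common (hf : DDS.FGConnected f) (x y : α) : ∃ k l, f^[k] x = f^[l] y := by
  induction hf x y with
  | rel u w h => exact ⟨1, 0, by simpa using h⟩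
  | refl u => exact ⟨0, 0, rfl⟩
  | symm u w _ ih =>
      obtain ⟨k, l, h⟩ := ih
      exact ⟨l, k, h.symm⟩
  | trans u w z _ _ ih1 ih2 =>
      obtain ⟨k, l, h1⟩ := ih1
      obtain ⟨k', l', h2⟩ := ih2
      refine ⟨k' + k, l + l', ?_⟩
      rw [iterate_add_apply, h1, ← iterate_add_apply, Nat.add_comm k' l,
        iterate_add_apply, h2, ← iterate_add_apply]

variable {f a}

lemma pp_iterate {x : α} (h : x ∈ periodicPts f) (m : ℕ) : f^[m] x ∈ periodicPts f := by
  obtain ⟨n, hn, hx⟩ := h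
  exact ⟨n, hn, hx.apply_iterate m⟩

lemma pp_apply {x : α} (h : x ∈ periodicPts f) : f x ∈ periodicPts f := by
  obtain ⟨n, hn, hx⟩ := h
  exact ⟨n, hn, hx.apply⟩

lemma f_injOn_pp {x y : α} (hx : x ∈ periodicPts f) (hy : y ∈ periodicPts f)
    (h : f x = f y) : x = y := by
  obtain ⟨n, hn, hxn⟩ := hx
  obtain ⟨m, hm, hym⟩ := hy
  have hx2 : f^[n * m] x = x := hxn.mul_const m
  have hy2 : f^[n * m] y = y := hym.const_mul n
  obtain ⟨c, hc⟩ : ∃ c, n * m = c + 1 := ⟨n * m - 1, by have := Nat.mul_pos hn hm; omega⟩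
  rw [hc] at hx2 hy2
  calc x = f^[c + 1] x := hx2.symm
    _ = f^[c] (f x) := iterate_succ_apply _ _ _
    _ = f^[c] (f y) := by rw [h]
    _ = f^[c + 1] y := (iterate_succ_apply _ _ _).symm
    _ = y := hy2

lemma iterate_injOn_pp (i : ℕ) : ∀ x y : α, x ∈ periodicPts f → y ∈ periodicPts f →
    f^[i] x = f^[i] y → x = y := by
  induction i with
  | zero => intro x y _ _ h; simpa using h
  | succ i ih =>
      intro x y hx hy h
      rw [iterate_succ_apply, iterate_succ_apply] at h
      exact f_injOn_pp hx hy (ih (f x) (f y) (pp_apply hx) (pp_apply hy) h)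

variable (f a)

lemma hit_exists (hf : DDS.FGConnected f) (ha : a ∈ periodicPts f) (x : α) :
    ∃ i, f^[i] x = a := by
  have hp : 0 < minimalPeriod f a := minimalPeriod_pos_of_mem_periodicPts ha
  obtain ⟨k, l, h⟩ := reach_common f hf x a
  refine ⟨l * (minimalPeriod f a - 1) + k, ?_⟩
  rw [iterate_add_apply, h, ← iterate_add_apply, ← Nat.mul_succ, Nat.succ_eq_add_one,
    Nat.sub_add_cancel hp]
  exact isPeriodicPt_iff_minimalPeriod_dvd.mpr (dvd_mul_left _ l)

lemma periodicCount_eq (hf : DDS.FGConnected f) (ha : a ∈ periodicPts f) :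
    DDS.periodicCount f = minimalPeriod f a := by
  have hp : 0 < minimalPeriod f a := minimalPeriod_pos_of_mem_periodicPts ha
  set p := minimalPeriod f a with hpdef
  have hF : ∀ j : Fin p, ∃ n, 1 ≤ n ∧ f^[n] (f^[(j : ℕ)] a) = f^[(j : ℕ)] a :=
    fun j => ⟨p, hp, ((isPeriodicPt_minimalPeriod f a).apply_iterate (j : ℕ))⟩
  have hbij : Function.Bijective
      (fun j : Fin p => (⟨f^[(j : ℕ)] a, hF j⟩ : {x : α // ∃ n, 1 ≤ n ∧ f^[n] x = x})) := by
    constructor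
    · intro j j' h
      have := congrArg Subtype.val h
      exact Fin.ext (Function.iterate_injOn_Iio_minimalPeriod j.2 j'.2 this)
    · rintro ⟨u, n, hn, hu⟩
      obtain ⟨k, l, h⟩ := reach_common f hf u a
      have hN : f^[n * (k + 1)] u = u := (show IsPeriodicPt f n u from hu).mul_const (k + 1)
      have hk : k ≤ n * (k + 1) := by
        have := Nat.le_mul_of_pos_left (k + 1) hn
        omega
      have hu2 : u = f^[(n * (k + 1) - k + l) % p] a := by
        rw [hpdef, iterate_mod_minimalPeriod_eq]
        calc u = f^[n * (k + 1)] u := hN.symm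
          _ = f^[(n * (k + 1) - k) + k] u := by congr 1; omega
          _ = f^[n * (k + 1) - k] (f^[k] u) := iterate_add_apply _ _ _ _
          _ = f^[n * (k + 1) - k] (f^[l] a) := by rw [h]
          _ = f^[(n * (k + 1) - k) + l] a := (iterate_add_apply _ _ _ _).symm
      exact ⟨⟨(n * (k + 1) - k + l) % p, Nat.mod_lt _ hp⟩, Subtype.ext hu2.symm⟩
  rw [DDS.periodicCount, ← Nat.card_eq_of_bijective _ hbij, Nat.card_eq_fintype_card,
    Fintype.card_fin]

/-- The cycle point at "level `i`": the unique periodic point mapping to `a` in `i` steps. -/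
noncomputable def cyc (i : ℕ) : α :=
  f^[(minimalPeriod f a - i % minimalPeriod f a) % minimalPeriod f a] a

lemma cyc_pp (ha : a ∈ periodicPts f) (i : ℕ) : cyc f a i ∈ periodicPts f :=
  pp_iterate ha _

lemma cyc_spec (ha : a ∈ periodicPts f) (i : ℕ) : f^[i] (cyc f a i) = a := by
  have hp : 0 < minimalPeriod f a := minimalPeriod_pos_of_mem_periodicPts ha
  set p := minimalPeriod f a with hpdef
  rw [cyc, ← iterate_add_apply]
  refine isPeriodicPt_iff_minimalPeriod_dvd.mpr ?_
  rw [← hpdef]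
  rcases Nat.eq_zero_or_pos (i % p) with h0 | hpos
  · simp only [h0, Nat.sub_zero, Nat.mod_self, Nat.add_zero]
    exact Nat.dvd_of_mod_eq_zero h0
  · have h1 : i % p < p := Nat.mod_lt _ hp
    have h2 : (p - i % p) % p = p - i % p := Nat.mod_eq_of_lt (by omega)
    rw [h2]
    have hdm := Nat.div_add_mod i p
    exact ⟨i / p + 1, by rw [Nat.mul_add, Nat.mul_one]; omega⟩

lemma cyc_zero : cyc f a 0 = a := by
  simp [cyc]

lemma cyc_pmod (i : ℕ) : cyc f a (i + minimalPeriod f a) = cyc f a i := by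
  rw [cyc, cyc, Nat.add_mod_right]

lemma cyc_top (ha : a ∈ periodicPts f) : cyc f a (minimalPeriod f a) = a := by
  have := cyc_pmod f a 0
  rw [Nat.zero_add] at this
  rw [this, cyc_zero]

lemma iterate_p_cyc (i : ℕ) : f^[minimalPeriod f a] (cyc f a i) = cyc f a i := by
  rw [cyc, ← iterate_add_apply, Nat.add_comm, iterate_add_apply, iterate_minimalPeriod]

lemma eq_cyc (ha : a ∈ periodicPts f) {u : α} {i : ℕ} (hu : u ∈ periodicPts f)
    (h : f^[i] u = a) : u = cyc f a i :=
  iterate_injOn_pp i u _ hu (cyc_pp f a ha i) (by rw [h, cyc_spec f a ha])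

lemma f_cyc (ha : a ∈ periodicPts f) (i : ℕ) : f (cyc f a (i + 1)) = cyc f a i :=
  eq_cyc f a ha (pp_apply (cyc_pp f a ha (i + 1)))
    (by rw [← iterate_succ_apply]; exact cyc_spec f a ha (i + 1))

lemma fa_cyc (ha : a ∈ periodicPts f) : f a = cyc f a (minimalPeriod f a - 1) := by
  have hp : 0 < minimalPeriod f a := minimalPeriod_pos_of_mem_periodicPts ha
  have h := f_cyc f a ha (minimalPeriod f a - 1)
  rw [Nat.sub_add_cancel hp, cyc_top f a ha] at h
  exact h

/-- Least `i` with `f^[i] x = a`. -/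
noncomputable def minHit (x : α) : ℕ := sInf {i | f^[i] x = a}

/-- Least `k` with `f^[k] x` periodic. -/
noncomputable def ptail (x : α) : ℕ := sInf {k | f^[k] x ∈ periodicPts f}

lemma minHit_spec (hf : DDS.FGConnected f) (ha : a ∈ periodicPts f) (x : α) :
    f^[minHit f a x] x = a :=
  Nat.sInf_mem (hit_exists f a hf ha x)

lemma ptail_spec (hf : DDS.FGConnected f) (ha : a ∈ periodicPts f) (x : α) :
    f^[ptail f x] x ∈ periodicPts f := by
  have h : {k | f^[k] x ∈ periodicPts f}.Nonempty :=
    ⟨minHit f a x, by rw [Set.mem_setOf_eq, minHit_spec f a hf ha x]; exact ha⟩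
  have := Nat.sInf_mem h
  rw [Set.mem_setOf_eq] at this
  exact this

lemma phase_aux {w : α} (hw : f^[minimalPeriod f a] w = w) {s t : ℕ} (hst : s ≤ t)
    (hs : f^[s] w = a) (ht : f^[t] w = a) : minimalPeriod f a ∣ t - s := by
  have h1 : f^[t - s] a = a := by
    calc f^[t - s] a = f^[t - s] (f^[s] w) := by rw [hs]
      _ = f^[(t - s) + s] w := (iterate_add_apply _ _ _ _).symm
      _ = f^[t] w := by congr 1; omega
      _ = a := ht
  exact IsPeriodicPt.minimalPeriod_dvd h1

lemma phase_eq {w : α} (hw : f^[minimalPeriod f a] w = w) {s t : ℕ}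
    (hs : f^[s] w = a) (ht : f^[t] w = a) :
    s % minimalPeriod f a = t % minimalPeriod f a := by
  rcases le_total s t with h | h
  · exact (Nat.modEq_iff_dvd' h).mpr (phase_aux f a hw h hs ht)
  · exact ((Nat.modEq_iff_dvd' h).mpr (phase_aux f a hw h ht hs)).symm

lemma minHit_eq (hf : DDS.FGConnected f) (ha : a ∈ periodicPts f) (x : α) (j : ℕ)
    (hj : f^[j] x = a) :
    minHit f a x = ptail f x + ((j - ptail f x) % minimalPeriod f a) := by
  have hp : 0 < minimalPeriod f a := minimalPeriod_pos_of_mem_periodicPts ha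
  set p := minimalPeriod f a with hpdef
  set k := ptail f x with hkdef
  set i := minHit f a x with hidef
  set w := f^[k] x with hwdef
  have hw_pp : w ∈ periodicPts f := ptail_spec f a hf ha x
  have hi : f^[i] x = a := minHit_spec f a hf ha x
  have hk_le_i : k ≤ i := Nat.sInf_le (by rw [Set.mem_setOf_eq, hi]; exact ha)
  have hk_le_j : k ≤ j := Nat.sInf_le (by rw [Set.mem_setOf_eq, hj]; exact ha)
  have hiter : ∀ m : ℕ, k ≤ m → f^[m - k] w = f^[m] x := by
    intro m hm
    rw [hwdef, ← iterate_add_apply]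
    congr 1
    omega
  have hsw : f^[i - k] w = a := by rw [hiter i hk_le_i]; exact hi
  have htw : f^[j - k] w = a := by rw [hiter j hk_le_j]; exact hj
  have hwc : w = cyc f a (i - k) := eq_cyc f a ha hw_pp hsw
  have hpw : f^[p] w = w := by rw [hwc]; exact iterate_p_cyc f a _
  have hph : (i - k) % p = (j - k) % p := phase_eq f a hpw hsw htw
  have hlt : i - k < p := by
    by_contra hge
    push_neg at hge
    have h2 : f^[i - p] x = a := by
      have h3 : k ≤ i - p := by omega
      rw [← hiter (i - p) h3]
      calc f^[(i - p) - k] w = f^[(i - p) - k] (f^[p] w) := by rw [hpw]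
        _ = f^[((i - p) - k) + p] w := (iterate_add_apply _ _ _ _).symm
        _ = f^[i - k] w := by congr 1; omega
        _ = a := hsw
    have h5 : minHit f a x ≤ i - p := Nat.sInf_le h2
    rw [← hidef] at h5
    omega
  rw [← hph, Nat.mod_eq_of_lt hlt]
  omega

end FG

/-! ### More minHit lemmas -/

section FG2

variable {α : Type*} [Fintype α] (f : α → α) (a : α)

lemma minHit_self : minHit f a a = 0 :=
  Nat.sInf_eq_zero.mpr (Or.inl (show (0 : ℕ) ∈ {i | f^[i] a = a} by simp))

lemma tail_zero_of_pp {x : α} (hx : x ∈ periodicPts f) : ptail f x = 0 :=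
  Nat.sInf_eq_zero.mpr (Or.inl (show (0 : ℕ) ∈ {k | f^[k] x ∈ periodicPts f} by simpa))

lemma minHit_cyc (hf : DDS.FGConnected f) (ha : a ∈ periodicPts f) (i : ℕ)
    (hi : i < minimalPeriod f a) : minHit f a (cyc f a i) = i := by
  have h := minHit_eq f a hf ha (cyc f a i) i (cyc_spec f a ha i)
  rw [tail_zero_of_pp f (cyc_pp f a ha i)] at h
  simpa [Nat.mod_eq_of_lt hi] using h

lemma minHit_succ (hf : DDS.FGConnected f) (ha : a ∈ periodicPts f) (x : α) (m : ℕ)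
    (h : minHit f a x = m + 1) : minHit f a (f x) = m := by
  have h1 : f^[m] (f x) = a := by
    have h0 := minHit_spec f a hf ha x
    rw [h, iterate_succ_apply] at h0
    exact h0
  have hle : minHit f a (f x) ≤ m := Nat.sInf_le h1
  have h2 : f^[minHit f a (f x) + 1] x = a := by
    rw [iterate_succ_apply]
    exact minHit_spec f a hf ha (f x)
  have hge : minHit f a x ≤ minHit f a (f x) + 1 := Nat.sInf_le h2
  omega

end FG2

/-! ### Unroll lemmas -/

section Unroll

variable {α : Type*} [Fintype α] (f : α → α) (a : α)

lemma up_iter : ∀ (k i : ℕ) (u : α) (h : f^[i] u = a), k ≤ i →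
    (((DDS.unroll f a).parent)^[k] ⟨(u, i), h⟩).1 = (f^[k] u, i - k) := by
  intro k
  induction k with
  | zero => intro i u h _; simp; rfl
  | succ k ih =>
      intro i u h hk
      cases i with
      | zero => omega
      | succ i =>
          erw [Function.iterate_succ_apply]
          have hstep : (DDS.unroll f a).parent ⟨(u, i + 1), h⟩ =
              (⟨(f u, i), by rw [← Function.iterate_succ_apply]; exact h⟩ :
                DDS.UnrollVertex f a) := rfl
          erw [hstep, ih i (f u) _ (by omega)]
          rw [← iterate_succ_apply, Nat.succ_sub_succ]

lemma up_iter' (k : ℕ) (v : DDS.UnrollVertex f a) (hk : k ≤ v.1.2) :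
    (((DDS.unroll f a).parent)^[k] v).1 = (f^[k] v.1.1, v.1.2 - k) := by
  obtain ⟨⟨u, i⟩, h⟩ := v
  exact up_iter f a k i u h hk

lemma unroll_height (v : DDS.UnrollVertex f a) : (DDS.unroll f a).height v = v.1.2 := by
  obtain ⟨⟨u, i⟩, h⟩ := v
  show (DDS.unroll f a).height _ = i
  have hmem : (DDS.unroll f a).parent^[i] ⟨(u, i), h⟩ = (DDS.unroll f a).root :=
    DDS.unrollParent_iterate f a i u h
  apply le_antisymm
  · exact Nat.sInf_le hmem
  · apply le_csInf ⟨i, hmem⟩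
    intro k hk
    rw [Set.mem_setOf_eq] at hk
    by_contra hlt
    push_neg at hlt
    have h1 := up_iter f a k i u h (le_of_lt hlt)
    rw [hk] at h1
    have h2 : (0 : ℕ) = i - k := congrArg Prod.snd h1
    omega

lemma unroll_deep_iff (ha : a ∈ periodicPts f) (v : DDS.UnrollVertex f a) :
    Deep (DDS.unroll f a) v ↔ v.1.1 ∈ periodicPts f := by
  obtain ⟨⟨u, i⟩, h⟩ := v
  show _ ↔ u ∈ periodicPts f
  constructor
  · intro hd
    obtain ⟨w, hw⟩ := hd (i + Fintype.card α)
    obtain ⟨⟨z, j⟩, hz⟩ := w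
    by_cases hj : i + Fintype.card α ≤ j
    · have h1 := up_iter f a (i + Fintype.card α) j z hz hj
      rw [hw] at h1
      have h2 : u = f^[i + Fintype.card α] z := congrArg Prod.fst h1
      obtain ⟨k₁, k₂, hne, hkk⟩ := Fintype.exists_ne_map_eq_of_card_lt
        (fun k : Fin (Fintype.card α + 1) => f^[(k : ℕ)] z) (by simp)
      have key : ∀ s t : Fin (Fintype.card α + 1), (s : ℕ) < (t : ℕ) →
          f^[(s : ℕ)] z = f^[(t : ℕ)] z → u ∈ periodicPts f := by
        intro s t hlt hst
        have hn : (t : ℕ) ≤ i + Fintype.card α := by have := t.isLt; omega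
        refine ⟨(t : ℕ) - (s : ℕ), by omega, ?_⟩
        show f^[(t : ℕ) - (s : ℕ)] u = u
        calc f^[(t : ℕ) - (s : ℕ)] u
            = f^[(t : ℕ) - (s : ℕ)] (f^[i + Fintype.card α] z) := by rw [← h2]
          _ = f^[((t : ℕ) - (s : ℕ)) + (i + Fintype.card α)] z :=
              (iterate_add_apply _ _ _ _).symm
          _ = f^[((i + Fintype.card α) - (s : ℕ)) + (t : ℕ)] z := by congr 1; omega
          _ = f^[(i + Fintype.card α) - (s : ℕ)] (f^[(t : ℕ)] z) := iterate_add_apply _ _ _ _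
          _ = f^[(i + Fintype.card α) - (s : ℕ)] (f^[(s : ℕ)] z) := by rw [hst]
          _ = f^[((i + Fintype.card α) - (s : ℕ)) + (s : ℕ)] z :=
              (iterate_add_apply _ _ _ _).symm
          _ = f^[i + Fintype.card α] z := by congr 1; omega
          _ = u := h2.symm
      rcases Ne.lt_or_gt hne with hlt | hlt
      · exact key k₁ k₂ hlt hkk
      · exact key k₂ k₁ hlt hkk.symm
    · push_neg at hj
      have hroot : (DDS.unroll f a).parent^[i + Fintype.card α]
          (⟨(z, j), hz⟩ : DDS.UnrollVertex f a) = (DDS.unroll f a).root := by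
        have hsplit : i + Fintype.card α = (i + Fintype.card α - j) + j := by omega
        erw [hsplit, iterate_add_apply]
        have hbase : (DDS.unroll f a).parent^[j] (⟨(z, j), hz⟩ : DDS.UnrollVertex f a) =
            (DDS.unroll f a).root := DDS.unrollParent_iterate f a j z hz
        rw [hbase]
        exact Function.iterate_fixed (DDS.unroll f a).parent_root _
      rw [hroot] at hw
      have h3 : a = u := congrArg (fun t => t.1.1) hw
      rw [← h3]
      exact ha
  · intro hu n
    obtain ⟨n₀, hn₀, hper⟩ := hu
    have ht : f^[n₀ * n] u = u := hper.mul_const n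
    have hn' : n ≤ n₀ * n := Nat.le_mul_of_pos_left n hn₀
    have hz : f^[i + n] (f^[n₀ * n - n] u) = a := by
      rw [← iterate_add_apply]
      have he : (i + n) + (n₀ * n - n) = i + n₀ * n := by omega
      rw [he, iterate_add_apply, ht]
      exact h
    refine ⟨⟨(f^[n₀ * n - n] u, i + n), hz⟩, ?_⟩
    apply Subtype.ext
    have h1 := up_iter f a n (i + n) (f^[n₀ * n - n] u) hz (by omega)
    rw [h1]
    have h2 : f^[n] (f^[n₀ * n - n] u) = u := by
      rw [← iterate_add_apply]
      have he2 : n + (n₀ * n - n) = n₀ * n := by omega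
      rw [he2, ht]
    rw [h2]
    simp

lemma unroll_tailset (ha : a ∈ periodicPts f) (v : DDS.UnrollVertex f a) :
    {k | f^[k] v.1.1 ∈ periodicPts f} =
      {k | Deep (DDS.unroll f a) ((DDS.unroll f a).parent^[k] v)} := by
  ext k
  simp only [Set.mem_setOf_eq]
  by_cases hk : k ≤ v.1.2
  · rw [unroll_deep_iff f a ha, up_iter' f a k v hk]
  · push_neg at hk
    have hroot : (DDS.unroll f a).parent^[k] v = (DDS.unroll f a).root := by
      obtain ⟨⟨z, j⟩, hz⟩ := v
      simp only at hk
      have hsplit : k = (k - j) + j := by omega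
      erw [hsplit, iterate_add_apply]
      have hbase : (DDS.unroll f a).parent^[j] (⟨(z, j), hz⟩ : DDS.UnrollVertex f a) =
          (DDS.unroll f a).root := DDS.unrollParent_iterate f a j z hz
      rw [hbase]
      exact Function.iterate_fixed (DDS.unroll f a).parent_root _
    rw [hroot]
    constructor
    · intro _
      exact deep_root _
    · intro _
      have h4 : f^[k] v.1.1 = f^[k - v.1.2] a := by
        conv_lhs => rw [show k = (k - v.1.2) + v.1.2 by omega]
        rw [iterate_add_apply, v.2]
      rw [h4]
      exact pp_iterate ha _

lemma unroll_parent_fst (v : DDS.UnrollVertex f a) (hv : v.1.2 ≠ 0) :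
    ((DDS.unroll f a).parent v).1.1 = f v.1.1 := by
  obtain ⟨⟨u, i⟩, h⟩ := v
  cases i with
  | zero => simp at hv
  | succ i => rfl

end Unroll

/-! ### Key transfer lemmas -/

section Key

variable {α β : Type*} [Fintype α] [Fintype β] {f : α → α} {g : β → β} {a : α} {b : β}

lemma key (hf : DDS.FGConnected f) (hg : DDS.FGConnected g)
    (ha : a ∈ periodicPts f) (hb : b ∈ periodicPts g)
    (hpq : minimalPeriod f a = minimalPeriod g b)
    (e : DDS.UnrollVertex f a ≃ DDS.UnrollVertex g b)
    (he : ∀ u v, (DDS.unroll f a).Edge u v ↔ (DDS.unroll g b).Edge (e u) (e v))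
    (v : DDS.UnrollVertex f a) :
    (e v).1.2 = v.1.2 ∧ minHit g b ((e v).1.1) = minHit f a v.1.1 := by
  have hlev : (e v).1.2 = v.1.2 := by
    rw [← unroll_height g b (e v), ← unroll_height f a v]
    exact e_height he v
  refine ⟨hlev, ?_⟩
  have hyb : g^[(e v).1.2] ((e v).1.1) = b := (e v).2
  have htails : ptail g ((e v).1.1) = ptail f v.1.1 := by
    show sInf _ = sInf _
    congr 1
    rw [unroll_tailset g b hb (e v), unroll_tailset f a ha v]
    ext k
    simp only [Set.mem_setOf_eq]
    rw [← e_parent_iter he k v, e_deep he]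
  have h1 := minHit_eq g b hg hb ((e v).1.1) ((e v).1.2) hyb
  have h2 := minHit_eq f a hf ha v.1.1 v.1.2 v.2
  rw [h1, htails, hlev, ← hpq]
  exact h2.symm

lemma key_c (hf : DDS.FGConnected f) (hg : DDS.FGConnected g)
    (ha : a ∈ periodicPts f) (hb : b ∈ periodicPts g)
    (hpq : minimalPeriod f a = minimalPeriod g b)
    (e : DDS.UnrollVertex f a ≃ DDS.UnrollVertex g b)
    (he : ∀ u v, (DDS.unroll f a).Edge u v ↔ (DDS.unroll g b).Edge (e u) (e v))
    (i : ℕ) :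
    e ⟨(cyc f a i, i), cyc_spec f a ha i⟩ = ⟨(cyc g b i, i), cyc_spec g b hb i⟩ := by
  set v : DDS.UnrollVertex f a := ⟨(cyc f a i, i), cyc_spec f a ha i⟩ with hvdef
  have hlev : (e v).1.2 = i := by
    rw [← unroll_height g b (e v), e_height he, unroll_height f a]
  have hdeep : Deep (DDS.unroll g b) (e v) :=
    (e_deep he v).mpr ((unroll_deep_iff f a ha v).mpr (cyc_pp f a ha i))
  have hpp : (e v).1.1 ∈ periodicPts g := (unroll_deep_iff g b hb (e v)).mp hdeep
  have hyb : g^[i] ((e v).1.1) = b := by rw [← hlev]; exact (e v).2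
  have hcyc : (e v).1.1 = cyc g b i := eq_cyc g b hb hpp hyb
  apply Subtype.ext
  show (e v).1 = (cyc g b i, i)
  rw [← hcyc, ← hlev]

end Key

end RollAux

/-- A connected finite functional graph is determined, up to isomorphism, by any one of its
unrolls together with its cycle length (= number of periodic points). -/
theorem roll_unroll_iso {α β : Type*} [Fintype α] [Fintype β] [Nonempty α] [Nonempty β]
    (f : α → α) (g : β → β) (hf : FGConnected f) (hg : FGConnected g)
    (hcard : periodicCount f = periodicCount g)
    (a : α) (b : β)
    (ha : ∃ n, 1 ≤ n ∧ f^[n] a = a) (hb : ∃ n, 1 ≤ n ∧ g^[n] b = b)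
    (hiso : Isomorphic (unroll f a).Edge (unroll g b).Edge) :
    FGIso f g := by
  classical
  open RollAux Function in
  obtain ⟨e, he⟩ := hiso
  obtain ⟨na, hna, hfa⟩ := ha
  obtain ⟨nb, hnb, hgb⟩ := hb
  have ha' : a ∈ Function.periodicPts f := ⟨na, hna, hfa⟩
  have hb' : b ∈ Function.periodicPts g := ⟨nb, hnb, hgb⟩
  have hpq : Function.minimalPeriod f a = Function.minimalPeriod g b := by
    rw [← periodicCount_eq f a hf ha', ← periodicCount_eq g b hg hb', hcard]
  have he' : ∀ u v, (unroll g b).Edge u v ↔ (unroll f a).Edge (e.symm u) (e.symm v) := by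
    intro u v
    conv_lhs => rw [← e.apply_symm_apply u, ← e.apply_symm_apply v]
    exact (he _ _).symm
  have hs : ∀ x, f^[minHit f a x] x = a := minHit_spec f a hf ha'
  have hs' : ∀ y, g^[minHit g b y] y = b := minHit_spec g b hg hb'
  have k1 : ∀ x, (e ⟨(x, minHit f a x), hs x⟩).1.2 = minHit f a x :=
    fun x => (key hf hg ha' hb' hpq e he ⟨(x, minHit f a x), hs x⟩).1
  have k2 : ∀ x, minHit g b ((e ⟨(x, minHit f a x), hs x⟩).1.1) = minHit f a x :=
    fun x => (key hf hg ha' hb' hpq e he ⟨(x, minHit f a x), hs x⟩).2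
  have k1' : ∀ y, (e.symm ⟨(y, minHit g b y), hs' y⟩).1.2 = minHit g b y :=
    fun y => (key hg hf hb' ha' hpq.symm e.symm he' ⟨(y, minHit g b y), hs' y⟩).1
  have k2' : ∀ y, minHit f a ((e.symm ⟨(y, minHit g b y), hs' y⟩).1.1) = minHit g b y :=
    fun y => (key hg hf hb' ha' hpq.symm e.symm he' ⟨(y, minHit g b y), hs' y⟩).2
  have hΦ : ∀ x, e ⟨(x, minHit f a x), hs x⟩ =
      ⟨((e ⟨(x, minHit f a x), hs x⟩).1.1,
        minHit g b ((e ⟨(x, minHit f a x), hs x⟩).1.1)),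
        hs' ((e ⟨(x, minHit f a x), hs x⟩).1.1)⟩ := by
    intro x
    apply Subtype.ext
    exact Prod.ext rfl ((k1 x).trans (k2 x).symm)
  have hΨ : ∀ y, e.symm ⟨(y, minHit g b y), hs' y⟩ =
      ⟨((e.symm ⟨(y, minHit g b y), hs' y⟩).1.1,
        minHit f a ((e.symm ⟨(y, minHit g b y), hs' y⟩).1.1)),
        hs ((e.symm ⟨(y, minHit g b y), hs' y⟩).1.1)⟩ := by
    intro y
    apply Subtype.ext
    exact Prod.ext rfl ((k1' y).trans (k2' y).symm)
  refine ⟨⟨fun x => (e ⟨(x, minHit f a x), hs x⟩).1.1,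
          fun y => (e.symm ⟨(y, minHit g b y), hs' y⟩).1.1, ?_, ?_⟩, ?_⟩
  · intro x
    show (e.symm ⟨((e ⟨(x, minHit f a x), hs x⟩).1.1,
        minHit g b ((e ⟨(x, minHit f a x), hs x⟩).1.1)),
        hs' ((e ⟨(x, minHit f a x), hs x⟩).1.1)⟩).1.1 = x
    erw [← hΦ x, e.symm_apply_apply]
  · intro y
    show (e ⟨((e.symm ⟨(y, minHit g b y), hs' y⟩).1.1,
        minHit f a ((e.symm ⟨(y, minHit g b y), hs' y⟩).1.1)),
        hs ((e.symm ⟨(y, minHit g b y), hs' y⟩).1.1)⟩).1.1 = y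
    erw [← hΨ y, e.apply_symm_apply]
  · intro x
    show (e ⟨(f x, minHit f a (f x)), hs (f x)⟩).1.1 =
      g ((e ⟨(x, minHit f a x), hs x⟩).1.1)
    rcases Nat.eq_zero_or_pos (minHit f a x) with hm | hmpos
    · -- x = a
      have hxa : x = a := by
        have h0 := hs x
        rw [hm] at h0
        simpa using h0
      subst hxa
      have hva : (⟨(x, minHit f x x), hs x⟩ : UnrollVertex f x) = (unroll f x).root := by
        apply Subtype.ext
        show (x, minHit f x x) = (x, 0)
        rw [hm]
      have hΦa : (e ⟨(x, minHit f x x), hs x⟩).1.1 = b := by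
        rw [hva, e_root he]
        rfl
      have hp : 0 < Function.minimalPeriod f x :=
        Function.minimalPeriod_pos_of_mem_periodicPts ha'
      have hfa2 : f x = cyc f x (Function.minimalPeriod f x - 1) := fa_cyc f x ha'
      have hm2 : minHit f x (f x) = Function.minimalPeriod f x - 1 := by
        rw [hfa2]
        exact minHit_cyc f x hf ha' _ (by omega)
      have hvfa : (⟨(f x, minHit f x (f x)), hs (f x)⟩ : UnrollVertex f x) =
          ⟨(cyc f x (Function.minimalPeriod f x - 1), Function.minimalPeriod f x - 1),
            cyc_spec f x ha' (Function.minimalPeriod f x - 1)⟩ := by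
        apply Subtype.ext
        show (f x, minHit f x (f x)) = _
        rw [hm2, hfa2]
      rw [hvfa, key_c hf hg ha' hb' hpq e he (Function.minimalPeriod f x - 1), hΦa]
      show cyc g b (Function.minimalPeriod f x - 1) = g b
      rw [hpq]
      exact (fa_cyc g b hb').symm
    · -- minHit x = m + 1
      obtain ⟨m, hm⟩ : ∃ m, minHit f a x = m + 1 := ⟨minHit f a x - 1, by omega⟩
      have h1 : minHit f a (f x) = m := minHit_succ f a hf ha' x m hm
      have hvfx : (⟨(f x, minHit f a (f x)), hs (f x)⟩ : UnrollVertex f a) =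
          (unroll f a).parent ⟨(x, minHit f a x), hs x⟩ := by
        apply Subtype.ext
        have h2 := up_iter' f a 1 ⟨(x, minHit f a x), hs x⟩
          (show 1 ≤ minHit f a x by omega)
        rw [Function.iterate_one] at h2
        rw [h2]
        show (f x, minHit f a (f x)) = (f^[1] x, minHit f a x - 1)
        rw [h1, hm]
        simp
      erw [hvfx, e_parent he]
      exact unroll_parent_fst g b (e ⟨(x, minHit f a x), hs x⟩) (by rw [k1 x]; omega)
end
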